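/- arXiv:1103.1719 — 7 statements merged into one kernel-verified Lean document; each statement's English description precedes it below -/
import Mathlib

section
/- Let E be a URI-set and set E_n = E ∩ {1,...,n}. Then |E_n| / ln n → 1 almost surely as n → ∞. -/
open MeasureTheory ProbabilityTheory Filter

noncomputable def Hh (n : ℕ) : ℝ := ∑ i ∈ Finset.Icc 1 n, (i : ℝ)⁻¹

lemma Hh_succ (n : ℕ) : Hh (n + 1) = Hh n + ((n : ℝ) + 1)⁻¹ := by
  unfold Hh
  rw [Finset.sum_Icc_succ_top (by omega)]
  push_cast; ring

lemma Hh_mono : Monotone Hh := by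
  apply monotone_nat_of_le_succ
  intro n
  rw [Hh_succ]
  exact le_add_of_nonneg_right (by positivity)

lemma log_succ_le_Hh (n : ℕ) (hn : 1 ≤ n) : Real.log ((n : ℝ) + 1) ≤ Hh n := by
  induction n with
  | zero => omega
  | succ m ih =>
    rcases Nat.eq_or_lt_of_le hn with h1 | h1
    · simp only [← h1]
      norm_num [Hh, Finset.Icc_self]
      nlinarith [Real.log_le_sub_one_of_pos (by norm_num : (0:ℝ) < 2)]
    · have hm : 1 ≤ m := by omega
      have := ih hm
      rw [Hh_succ]
      have key : Real.log ((m : ℝ) + 2) - Real.log ((m : ℝ) + 1) ≤ ((m : ℝ) + 1)⁻¹ := by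
        rw [← Real.log_div (by positivity) (by positivity)]
        have := Real.log_le_sub_one_of_pos (x := ((m:ℝ)+2)/((m:ℝ)+1)) (by positivity)
        have h2 : ((m:ℝ)+2)/((m:ℝ)+1) - 1 = ((m:ℝ)+1)⁻¹ := by field_simp; norm_num
        linarith
      have he : ((m : ℕ) + 1 : ℕ) = ((m : ℝ) + 1 : ℝ) ∨ True := Or.inr trivial
      push_cast
      have h3 : (m : ℝ) + 1 + 1 = (m : ℝ) + 2 := by ring
      rw [h3]
      linarith

lemma Hh_le_log (n : ℕ) (hn : 1 ≤ n) : Hh n ≤ 1 + Real.log n := by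
  induction n with
  | zero => omega
  | succ m ih =>
    rcases Nat.eq_or_lt_of_le hn with h1 | h1
    · simp only [← h1]
      norm_num [Hh, Finset.Icc_self]
    · have hm : 1 ≤ m := by omega
      have := ih hm
      rw [Hh_succ]
      have hmpos : (0:ℝ) < m := by exact_mod_cast hm
      have key : ((m : ℝ) + 1)⁻¹ ≤ Real.log ((m : ℝ) + 1) - Real.log m := by
        rw [← Real.log_div (by positivity) (by positivity)]
        have := Real.log_le_sub_one_of_pos (x := ((m:ℝ)+1)/(m:ℝ)) (by positivity)
        have h2 : Real.log (((m:ℝ)+1)/(m:ℝ)) = - Real.log ((m:ℝ)/((m:ℝ)+1)) := by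
          rw [← Real.log_inv]; congr 1; field_simp
        have h3 : Real.log ((m:ℝ)/((m:ℝ)+1)) ≤ (m:ℝ)/((m:ℝ)+1) - 1 :=
          Real.log_le_sub_one_of_pos (by positivity)
        have h4 : (m:ℝ)/((m:ℝ)+1) - 1 = -(((m:ℝ)+1)⁻¹) := by field_simp; ring
        rw [h2]
        linarith
      push_cast
      linarith

lemma Hh_pos (n : ℕ) (hn : 1 ≤ n) : 0 < Hh n := by
  have : Hh 1 ≤ Hh n := Hh_mono hn
  have h1 : Hh 1 = 1 := by norm_num [Hh, Finset.Icc_self]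
  linarith

lemma log_le_Hh (n : ℕ) (hn : 1 ≤ n) : Real.log n ≤ Hh n := by
  refine le_trans ?_ (log_succ_le_Hh n hn)
  apply Real.log_le_log (by exact_mod_cast hn)
  linarith


noncomputable def Xf {Ω : Type*} (E : ℕ → Set Ω) (i : ℕ) (ω : Ω) : ℝ :=
  (E i).indicator (fun _ => (1:ℝ)) ω

section
variable {Ω : Type*} [MeasurableSpace Ω] (μ : Measure Ω) [IsProbabilityMeasure μ]
  (E : ℕ → Set Ω)

lemma intg_X (hmeas : ∀ n, MeasurableSet (E n)) (i : ℕ) : Integrable (Xf E i) μ :=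
  (integrable_const (1:ℝ)).indicator (hmeas i)

lemma X_mul_X (i j : ℕ) (ω : Ω) :
    Xf E i ω * Xf E j ω = (E i ∩ E j).indicator (fun _ => (1:ℝ)) ω := by
  by_cases hi : ω ∈ E i <;> by_cases hj : ω ∈ E j <;>
    simp [Xf, Set.indicator_apply, hi, hj, Set.mem_inter_iff]

lemma intg_XX (hmeas : ∀ n, MeasurableSet (E n)) (i j : ℕ) :
    Integrable (fun ω => Xf E i ω * Xf E j ω) μ := by
  simp only [X_mul_X E]
  exact (integrable_const (1:ℝ)).indicator ((hmeas i).inter (hmeas j))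

lemma int_X (hmeas : ∀ n, MeasurableSet (E n))
    (hprob : ∀ n : ℕ, 1 ≤ n → μ (E n) = 1 / n) (i : ℕ) (hi : 1 ≤ i) :
    ∫ ω, Xf E i ω ∂μ = (i : ℝ)⁻¹ := by
  unfold Xf
  rw [integral_indicator_const (1:ℝ) (hmeas i), measureReal_def, hprob i hi]
  simp [ENNReal.toReal_div]

lemma meas_inter (hind : iIndepSet E μ) (i j : ℕ) (hij : i ≠ j) :
    μ (E i ∩ E j) = μ (E i) * μ (E j) := by
  have h := hind.meas_biInter ({i, j} : Finset ℕ)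
  simpa [Finset.set_biInter_insert, Finset.prod_insert, hij] using h

lemma int_XX (hmeas : ∀ n, MeasurableSet (E n)) (hind : iIndepSet E μ)
    (hprob : ∀ n : ℕ, 1 ≤ n → μ (E n) = 1 / n)
    (i j : ℕ) (hi : 1 ≤ i) (hj : 1 ≤ j) (hij : i ≠ j) :
    ∫ ω, Xf E i ω * Xf E j ω ∂μ = (i : ℝ)⁻¹ * (j : ℝ)⁻¹ := by
  simp only [X_mul_X E]
  rw [integral_indicator_const (1:ℝ) ((hmeas i).inter (hmeas j)), measureReal_def,
    meas_inter μ E hind i j hij, hprob i hi, hprob j hj]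
  simp [ENNReal.toReal_mul, ENNReal.toReal_div]

lemma int_X_sq (hmeas : ∀ n, MeasurableSet (E n))
    (hprob : ∀ n : ℕ, 1 ≤ n → μ (E n) = 1 / n) (i : ℕ) (hi : 1 ≤ i) :
    ∫ ω, Xf E i ω * Xf E i ω ∂μ = (i : ℝ)⁻¹ := by
  have h : ∀ ω, Xf E i ω * Xf E i ω = Xf E i ω := by
    intro ω; by_cases hi' : ω ∈ E i <;> simp [Xf, Set.indicator_apply, hi']
  simp only [h]
  exact int_X μ E hmeas hprob i hi

lemma intg_YY (hmeas : ∀ n, MeasurableSet (E n)) (i j : ℕ) :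
    Integrable (fun ω => (Xf E i ω - (i:ℝ)⁻¹) * (Xf E j ω - (j:ℝ)⁻¹)) μ := by
  have h : (fun ω => (Xf E i ω - (i:ℝ)⁻¹) * (Xf E j ω - (j:ℝ)⁻¹))
      = fun ω => Xf E i ω * Xf E j ω - (j:ℝ)⁻¹ * Xf E i ω - (i:ℝ)⁻¹ * Xf E j ω
        + (i:ℝ)⁻¹ * (j:ℝ)⁻¹ := by
    funext ω; ring
  rw [h]
  exact (((intg_XX μ E hmeas i j).sub ((intg_X μ E hmeas i).const_mul _)).sub
    ((intg_X μ E hmeas j).const_mul _)).add (integrable_const _)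

lemma int_YY_ne (hmeas : ∀ n, MeasurableSet (E n)) (hind : iIndepSet E μ)
    (hprob : ∀ n : ℕ, 1 ≤ n → μ (E n) = 1 / n)
    (i j : ℕ) (hi : 1 ≤ i) (hj : 1 ≤ j) (hij : i ≠ j) :
    ∫ ω, (Xf E i ω - (i:ℝ)⁻¹) * (Xf E j ω - (j:ℝ)⁻¹) ∂μ = 0 := by
  have hrw : (fun ω => (Xf E i ω - (i:ℝ)⁻¹) * (Xf E j ω - (j:ℝ)⁻¹))
      = fun ω => Xf E i ω * Xf E j ω - (j:ℝ)⁻¹ * Xf E i ω - (i:ℝ)⁻¹ * Xf E j ω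
        + (i:ℝ)⁻¹ * (j:ℝ)⁻¹ := by
    funext ω; ring
  have I1 : Integrable (fun ω => Xf E i ω * Xf E j ω - (j:ℝ)⁻¹ * Xf E i ω) μ :=
    (intg_XX μ E hmeas i j).sub ((intg_X μ E hmeas i).const_mul _)
  have I2 : Integrable (fun ω => Xf E i ω * Xf E j ω - (j:ℝ)⁻¹ * Xf E i ω
      - (i:ℝ)⁻¹ * Xf E j ω) μ := I1.sub ((intg_X μ E hmeas j).const_mul _)
  rw [hrw, integral_add I2 (integrable_const _),
    integral_sub I1 ((intg_X μ E hmeas j).const_mul _),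
    integral_sub (intg_XX μ E hmeas i j) ((intg_X μ E hmeas i).const_mul _),
    integral_const_mul, integral_const_mul, integral_const,
    int_XX μ E hmeas hind hprob i j hi hj hij, int_X μ E hmeas hprob i hi,
    int_X μ E hmeas hprob j hj]
  simp; ring

lemma int_YY_eq (hmeas : ∀ n, MeasurableSet (E n))
    (hprob : ∀ n : ℕ, 1 ≤ n → μ (E n) = 1 / n) (i : ℕ) (hi : 1 ≤ i) :
    ∫ ω, (Xf E i ω - (i:ℝ)⁻¹) * (Xf E i ω - (i:ℝ)⁻¹) ∂μ = (i:ℝ)⁻¹ - (i:ℝ)⁻¹ * (i:ℝ)⁻¹ := by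
  have hrw : (fun ω => (Xf E i ω - (i:ℝ)⁻¹) * (Xf E i ω - (i:ℝ)⁻¹))
      = fun ω => Xf E i ω * Xf E i ω - (i:ℝ)⁻¹ * Xf E i ω - (i:ℝ)⁻¹ * Xf E i ω
        + (i:ℝ)⁻¹ * (i:ℝ)⁻¹ := by
    funext ω; ring
  have I1 : Integrable (fun ω => Xf E i ω * Xf E i ω - (i:ℝ)⁻¹ * Xf E i ω) μ :=
    (intg_XX μ E hmeas i i).sub ((intg_X μ E hmeas i).const_mul _)
  have I2 : Integrable (fun ω => Xf E i ω * Xf E i ω - (i:ℝ)⁻¹ * Xf E i ω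
      - (i:ℝ)⁻¹ * Xf E i ω) μ := I1.sub ((intg_X μ E hmeas i).const_mul _)
  rw [hrw, integral_add I2 (integrable_const _),
    integral_sub I1 ((intg_X μ E hmeas i).const_mul _),
    integral_sub (intg_XX μ E hmeas i i) ((intg_X μ E hmeas i).const_mul _),
    integral_const_mul, integral_const_mul, integral_const,
    int_X_sq μ E hmeas hprob i hi, int_X μ E hmeas hprob i hi]
  simp

lemma var_bound (hmeas : ∀ n, MeasurableSet (E n)) (hind : iIndepSet E μ)
    (hprob : ∀ n : ℕ, 1 ≤ n → μ (E n) = 1 / n) (n : ℕ) :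
    ∫ ω, (∑ i ∈ Finset.Icc 1 n, (Xf E i ω - (i:ℝ)⁻¹))^2 ∂μ
      ≤ ∑ i ∈ Finset.Icc 1 n, (i : ℝ)⁻¹ := by
  set s := Finset.Icc 1 n with hs
  have hexp : ∀ ω : Ω, (∑ i ∈ s, (Xf E i ω - (i:ℝ)⁻¹))^2
      = ∑ i ∈ s, ∑ j ∈ s, (Xf E i ω - (i:ℝ)⁻¹) * (Xf E j ω - (j:ℝ)⁻¹) := by
    intro ω; rw [sq, Finset.sum_mul_sum]
  simp only [hexp]
  rw [integral_finset_sum _ (fun i _ => integrable_finset_sum _ (fun j _ => intg_YY μ E hmeas i j))]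
  have hterm : ∀ i ∈ s,
      (∫ ω, ∑ j ∈ s, (Xf E i ω - (i:ℝ)⁻¹) * (Xf E j ω - (j:ℝ)⁻¹) ∂μ) ≤ (i:ℝ)⁻¹ := by
    intro i hi
    rw [integral_finset_sum _ (fun j _ => intg_YY μ E hmeas i j),
      ← Finset.add_sum_erase s _ hi]
    have hi1 : 1 ≤ i := (Finset.mem_Icc.1 hi).1
    have hz : ∑ j ∈ s.erase i, ∫ ω, (Xf E i ω - (i:ℝ)⁻¹) * (Xf E j ω - (j:ℝ)⁻¹) ∂μ = 0 := by
      apply Finset.sum_eq_zero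
      intro j hj
      have hj1 : 1 ≤ j := (Finset.mem_Icc.1 (Finset.mem_of_mem_erase hj)).1
      exact int_YY_ne μ E hmeas hind hprob i j hi1 hj1 (Finset.ne_of_mem_erase hj).symm
    rw [hz, add_zero, int_YY_eq μ E hmeas hprob i hi1]
    have : 0 ≤ (i:ℝ)⁻¹ * (i:ℝ)⁻¹ := by positivity
    linarith
  exact Finset.sum_le_sum hterm

end

def nk (k : ℕ) : ℕ := 2 ^ (k * k)

lemma nk_one_le (k : ℕ) : 1 ≤ nk k := Nat.one_le_two_pow

lemma nk_lt (k : ℕ) : k < nk k :=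
  lt_of_lt_of_le (Nat.lt_two_pow_self (n := k)) (Nat.pow_le_pow_right (by norm_num) (by nlinarith))

lemma nk_strictMono : StrictMono nk := by
  intro a b hab
  exact Nat.pow_lt_pow_right (by norm_num) (by nlinarith)

lemma log_nk (k : ℕ) : Real.log (nk k) = (k:ℝ) * k * Real.log 2 := by
  unfold nk
  push_cast
  rw [Real.log_pow]
  push_cast; ring

lemma Hh_nk_lb (k : ℕ) (hk : 1 ≤ k) : (k:ℝ) * k * Real.log 2 ≤ Hh (nk k) := by
  rw [← log_nk]
  exact log_le_Hh _ (nk_one_le k)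

lemma Hh_nk_pos (k : ℕ) : 0 < Hh (nk k) := Hh_pos _ (nk_one_le k)

lemma Hratio : Tendsto (fun k => Hh (nk (k+1)) / Hh (nk k)) atTop (nhds 1) := by
  have hub : ∀ᶠ k : ℕ in atTop, Hh (nk (k+1)) / Hh (nk k)
      ≤ (1 + ((k:ℝ)+1) * ((k:ℝ)+1) * Real.log 2) / ((k:ℝ) * k * Real.log 2) := by
    filter_upwards [eventually_ge_atTop 1] with k hk
    have h1 : Hh (nk (k+1)) ≤ 1 + ((k:ℝ)+1) * ((k:ℝ)+1) * Real.log 2 := by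
      have := Hh_le_log (nk (k+1)) (nk_one_le _)
      rw [log_nk] at this
      push_cast at this ⊢
      linarith
    have h2 : (k:ℝ) * k * Real.log 2 ≤ Hh (nk k) := Hh_nk_lb k hk
    have hkpos : (0:ℝ) < (k:ℝ) * k * Real.log 2 := by
      have : (0:ℝ) < Real.log 2 := Real.log_pos (by norm_num)
      have hk' : (0:ℝ) < k := by exact_mod_cast hk
      positivity
    have h0 : 0 ≤ Hh (nk (k+1)) := (Hh_nk_pos _).le
    exact div_le_div₀ (by linarith) h1 hkpos h2
  have hlb : ∀ᶠ k : ℕ in atTop, (1:ℝ) ≤ Hh (nk (k+1)) / Hh (nk k) := by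
    filter_upwards with k
    rw [le_div_iff₀ (Hh_nk_pos k), one_mul]
    exact Hh_mono (nk_strictMono (Nat.lt_succ_self k)).le
  have hub_lim : Tendsto (fun k : ℕ =>
      (1 + ((k:ℝ)+1) * ((k:ℝ)+1) * Real.log 2) / ((k:ℝ) * k * Real.log 2)) atTop (nhds 1) := by
    have hlog : (0:ℝ) < Real.log 2 := Real.log_pos (by norm_num)
    have heq : ∀ᶠ k : ℕ in atTop, (1 + ((k:ℝ)+1) * ((k:ℝ)+1) * Real.log 2) / ((k:ℝ) * k * Real.log 2)
        = (Real.log 2)⁻¹ * ((k:ℝ)⁻¹ * (k:ℝ)⁻¹) + (1 + (k:ℝ)⁻¹) * (1 + (k:ℝ)⁻¹) := by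
      filter_upwards [eventually_ge_atTop 1] with k hk
      have hk' : (k:ℝ) ≠ 0 := by
        have : (0:ℝ) < k := by exact_mod_cast hk
        exact this.ne'
      field_simp
    rw [tendsto_congr' heq]
    have hinv : Tendsto (fun k : ℕ => (k:ℝ)⁻¹) atTop (nhds 0) :=
      tendsto_inv_atTop_zero.comp tendsto_natCast_atTop_atTop
    have h1 : Tendsto (fun k : ℕ => (Real.log 2)⁻¹ * ((k:ℝ)⁻¹ * (k:ℝ)⁻¹)) atTop (nhds 0) := by
      have := (hinv.mul hinv).const_mul (Real.log 2)⁻¹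
      simpa using this
    have h2 : Tendsto (fun k : ℕ => (1 + (k:ℝ)⁻¹) * (1 + (k:ℝ)⁻¹)) atTop (nhds 1) := by
      have hbase : Tendsto (fun k : ℕ => 1 + (k:ℝ)⁻¹) atTop (nhds 1) := by
        simpa using (tendsto_const_nhds (x := (1:ℝ)) (f := atTop (α := ℕ))).add hinv
      simpa using hbase.mul hbase
    simpa using h1.add h2
  exact tendsto_of_tendsto_of_tendsto_of_le_of_le' tendsto_const_nhds hub_lim hlb hub

open Classical in
noncomputable def km (m : ℕ) : ℕ := Nat.findGreatest (fun k => nk k ≤ m) m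

lemma km_le (m : ℕ) (hm : 1 ≤ m) : nk (km m) ≤ m := by
  classical
  unfold km
  rcases Nat.eq_zero_or_pos (Nat.findGreatest (fun k => nk k ≤ m) m) with h | h
  · rw [h]; exact hm
  · exact Nat.findGreatest_of_ne_zero (P := fun k => nk k ≤ m) (n := m) rfl h.ne'

lemma lt_km_succ (m : ℕ) : m < nk (km m + 1) := by
  classical
  unfold km
  by_cases h : Nat.findGreatest (fun k => nk k ≤ m) m + 1 ≤ m
  · have := Nat.findGreatest_is_greatest (P := fun k => nk k ≤ m) (n := m)
      (Nat.lt_succ_self _) h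
    exact not_le.mp this
  · have h2 := nk_lt (Nat.findGreatest (fun k => nk k ≤ m) m + 1)
    omega

lemma km_tendsto : Tendsto km atTop atTop := by
  classical
  rw [tendsto_atTop_atTop]
  intro K
  refine ⟨nk K, fun m hm => ?_⟩
  exact Nat.le_findGreatest ((nk_lt K).le.trans hm) hm

set_option maxHeartbeats 1000000 in
lemma interp (s : ℕ → ℝ) (hmono : Monotone s) (hnonneg : ∀ n, 0 ≤ s n)
    (hsub : Tendsto (fun k => s (nk k) / Hh (nk k)) atTop (nhds 1)) :
    Tendsto (fun m => s m / Real.log m) atTop (nhds 1) := by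
  have Binv : Tendsto (fun k => Hh (nk k) / Hh (nk (k+1))) atTop (nhds 1) := by
    have h : Tendsto (fun k => (Hh (nk (k+1)) / Hh (nk k))⁻¹) atTop (nhds ((1:ℝ)⁻¹)) :=
      Filter.Tendsto.inv₀ Hratio one_ne_zero
    rw [inv_one] at h
    refine h.congr fun k => ?_
    rw [inv_div]
  have km_succ_tendsto : Tendsto (fun m => km m + 1) atTop atTop :=
    tendsto_atTop_atTop.2 (fun K => (tendsto_atTop_atTop.1 km_tendsto K).imp
      (fun N h m hm => Nat.le_succ_of_le (h m hm)))
  have hlow : Tendsto (fun m => s (nk (km m)) / Hh (nk (km m))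
      * (Hh (nk (km m)) / Hh (nk (km m + 1)))) atTop (nhds 1) := by
    have := (hsub.comp km_tendsto).mul (Binv.comp km_tendsto)
    simpa using this
  have hup : Tendsto (fun m => s (nk (km m + 1)) / Hh (nk (km m + 1))
      * (Hh (nk (km m + 1)) / Hh (nk (km m)))) atTop (nhds 1) := by
    have := (hsub.comp km_succ_tendsto).mul (Hratio.comp km_tendsto)
    simpa using this
  have hH : Tendsto (fun m => s m / Hh m) atTop (nhds 1) := by
    refine tendsto_of_tendsto_of_tendsto_of_le_of_le' hlow hup ?_ ?_
    · filter_upwards [eventually_ge_atTop 1] with m hm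
      have hc : s (nk (km m)) / Hh (nk (km m)) * (Hh (nk (km m)) / Hh (nk (km m + 1)))
          = s (nk (km m)) / Hh (nk (km m + 1)) := by
        rw [div_mul_div_comm, mul_comm (s _) (Hh _), mul_div_mul_left _ _ (Hh_nk_pos _).ne']
      rw [hc]
      exact div_le_div₀ (hnonneg m) (hmono (km_le m hm)) (Hh_pos m hm)
        (Hh_mono (lt_km_succ m).le)
    · filter_upwards [eventually_ge_atTop 1] with m hm
      have hc : s (nk (km m + 1)) / Hh (nk (km m + 1)) * (Hh (nk (km m + 1)) / Hh (nk (km m)))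
          = s (nk (km m + 1)) / Hh (nk (km m)) := by
        rw [div_mul_div_comm, mul_comm (s _) (Hh _), mul_div_mul_left _ _ (Hh_nk_pos _).ne']
      rw [hc]
      exact div_le_div₀ (hnonneg _) (hmono (lt_km_succ m).le) (Hh_nk_pos _)
        (Hh_mono (km_le m hm))
  have hlog_at : Tendsto (fun m : ℕ => Real.log m) atTop atTop :=
    Real.tendsto_log_atTop.comp tendsto_natCast_atTop_atTop
  have hloginv : Tendsto (fun m : ℕ => (Real.log m)⁻¹) atTop (nhds 0) :=
    tendsto_inv_atTop_zero.comp hlog_at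
  have hHlog : Tendsto (fun m : ℕ => Hh m / Real.log m) atTop (nhds 1) := by
    refine tendsto_of_tendsto_of_tendsto_of_le_of_le' tendsto_const_nhds
      (by simpa using (tendsto_const_nhds (x := (1:ℝ)) (f := atTop (α := ℕ))).add hloginv) ?_ ?_
    · filter_upwards [eventually_ge_atTop 2] with m hm
      have hpos : 0 < Real.log m := Real.log_pos (by exact_mod_cast hm)
      rw [le_div_iff₀ hpos, one_mul]
      exact log_le_Hh m (by omega)
    · filter_upwards [eventually_ge_atTop 2] with m hm
      have hpos : 0 < Real.log m := Real.log_pos (by exact_mod_cast hm)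
      rw [div_le_iff₀ hpos]
      have h1 : (Real.log m)⁻¹ * Real.log m = 1 := inv_mul_cancel₀ hpos.ne'
      have h2 := Hh_le_log m (by omega)
      nlinarith
  have := hH.mul hHlog
  simp only [one_mul] at this
  refine this.congr' ?_
  filter_upwards [eventually_ge_atTop 2] with m hm
  rw [div_mul_div_comm, mul_comm (s m) (Hh m), mul_div_mul_left _ _ (Hh_pos m (by omega)).ne']


section Main
variable {Ω : Type*} [MeasurableSpace Ω] (μ : Measure Ω) [IsProbabilityMeasure μ]
  (E : ℕ → Set Ω)

lemma sum_Xf_eq (n : ℕ) (ω : Ω) :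
    ∑ i ∈ Finset.Icc 1 n, Xf E i ω
      = (∑ i ∈ Finset.Icc 1 n, (Xf E i ω - (i:ℝ)⁻¹)) + Hh n := by
  rw [Finset.sum_sub_distrib]
  unfold Hh
  ring

lemma subseq_ae (hmeas : ∀ n, MeasurableSet (E n)) (hind : iIndepSet E μ)
    (hprob : ∀ n : ℕ, 1 ≤ n → μ (E n) = 1 / n) :
    ∀ᵐ ω ∂μ, Tendsto (fun k => (∑ i ∈ Finset.Icc 1 (nk k), Xf E i ω) / Hh (nk k))
      atTop (nhds 1) := by
  set D : ℕ → Ω → ℝ := fun n ω => ∑ i ∈ Finset.Icc 1 n, (Xf E i ω - (i:ℝ)⁻¹) with hD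
  have hXmeas : ∀ i, Measurable (Xf E i) := fun i =>
    measurable_const.indicator (hmeas i)
  have hDmeas : ∀ n, Measurable (D n) := fun n =>
    Finset.measurable_sum _ (fun i _ => (hXmeas i).sub measurable_const)
  have hDint2 : ∀ n, Integrable (fun ω => (D n ω)^2) μ := by
    intro n
    have hexp : ∀ ω : Ω, (D n ω)^2
        = ∑ i ∈ Finset.Icc 1 n, ∑ j ∈ Finset.Icc 1 n,
          (Xf E i ω - (i:ℝ)⁻¹) * (Xf E j ω - (j:ℝ)⁻¹) := by
      intro ω; rw [hD]; rw [sq, Finset.sum_mul_sum]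
    simp only [hexp]
    exact integrable_finset_sum _ (fun i _ => integrable_finset_sum _
      (fun j _ => intg_YY μ E hmeas i j))
  -- key lintegral bound
  have key : ∀ n : ℕ, 1 ≤ n →
      ∫⁻ ω, ENNReal.ofReal ((D n ω / Hh n)^2) ∂μ ≤ ENNReal.ofReal ((Hh n)⁻¹) := by
    intro n hn
    have hHpos := Hh_pos n hn
    have heq : (fun ω => (D n ω / Hh n)^2) = fun ω => (D n ω)^2 / (Hh n)^2 := by
      funext ω; rw [div_pow]
    have hint : Integrable (fun ω => (D n ω / Hh n)^2) μ := by
      rw [heq]; exact (hDint2 n).div_const _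
    rw [← ofReal_integral_eq_lintegral_ofReal hint
      (Filter.Eventually.of_forall (fun ω => sq_nonneg _))]
    apply ENNReal.ofReal_le_ofReal
    have h1 : ∫ ω, (D n ω / Hh n)^2 ∂μ = (∫ ω, (D n ω)^2 ∂μ) / (Hh n)^2 := by
      rw [heq, integral_div]
    rw [h1]
    have h2 : ∫ ω, (D n ω)^2 ∂μ ≤ Hh n := var_bound μ E hmeas hind hprob n
    rw [div_le_iff₀ (by positivity)]
    calc ∫ ω, (D n ω)^2 ∂μ ≤ Hh n := h2
    _ = (Hh n)⁻¹ * (Hh n)^2 := by field_simp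
  -- summability
  have hsummable : Summable (fun k : ℕ => (Hh (nk k))⁻¹) := by
    rw [← summable_nat_add_iff 1]
    have hlog2 : (0:ℝ) < Real.log 2 := Real.log_pos (by norm_num)
    have hg : Summable (fun k : ℕ => (Real.log 2)⁻¹ * (1 / ((k:ℝ)+1)^2)) := by
      apply Summable.mul_left
      have := (summable_nat_add_iff (f := fun n : ℕ => 1 / (n:ℝ)^2) 1).2
        (Real.summable_one_div_nat_pow.2 (by norm_num))
      simpa using this
    refine Summable.of_nonneg_of_le (fun k => inv_nonneg.2 (Hh_nk_pos _).le) (fun k => ?_) hg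
    have hlb := Hh_nk_lb (k+1) (by omega)
    have hpos := Hh_nk_pos (k+1)
    have hb : (0:ℝ) < ((k:ℝ)+1)*((k:ℝ)+1) * Real.log 2 := by positivity
    calc (Hh (nk (k+1)))⁻¹ ≤ (((k:ℝ)+1)*((k:ℝ)+1) * Real.log 2)⁻¹ := by
          apply inv_anti₀ hb
          convert hlb using 2
          · rfl
          · push_cast; ring
    _ = (Real.log 2)⁻¹ * (1 / ((k:ℝ)+1)^2) := by
          rw [sq, mul_inv, mul_comm, one_div, mul_inv]
  set F : ℕ → Ω → ENNReal := fun k ω => ENNReal.ofReal ((D (nk k) ω / Hh (nk k))^2) with hF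
  have hFmeas : ∀ k, Measurable (F k) := fun k =>
    (((hDmeas (nk k)).div_const _).pow_const 2).ennreal_ofReal
  have htsum : ∫⁻ ω, ∑' k, F k ω ∂μ ≠ ⊤ := by
    rw [lintegral_tsum (fun k => (hFmeas k).aemeasurable)]
    have hle : ∑' k, ∫⁻ ω, F k ω ∂μ ≤ ∑' k, ENNReal.ofReal ((Hh (nk k))⁻¹) :=
      ENNReal.tsum_le_tsum (fun k => key (nk k) (nk_one_le k))
    refine ne_top_of_le_ne_top ?_ hle
    rw [← ENNReal.ofReal_tsum_of_nonneg (fun k => inv_nonneg.2 (Hh_nk_pos k).le) hsummable]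
    exact ENNReal.ofReal_ne_top
  have hae := ae_lt_top (Measurable.ennreal_tsum hFmeas) htsum
  filter_upwards [hae] with ω hω
  have h0 : Tendsto (fun k => F k ω) atTop (nhds 0) :=
    ENNReal.tendsto_atTop_zero_of_tsum_ne_top hω.ne
  have h1 : Tendsto (fun k => (D (nk k) ω / Hh (nk k))^2) atTop (nhds 0) := by
    have h := (ENNReal.tendsto_toReal (a := 0) (by simp)).comp h0
    simp only [ENNReal.toReal_zero] at h
    refine h.congr fun k => ?_
    simp only [Function.comp_apply, hF, ENNReal.toReal_ofReal (sq_nonneg _)]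
  have h2 : Tendsto (fun k => D (nk k) ω / Hh (nk k)) atTop (nhds 0) := by
    rw [tendsto_zero_iff_abs_tendsto_zero]
    have hsq := (Real.continuous_sqrt.tendsto 0).comp h1
    rw [Real.sqrt_zero] at hsq
    refine hsq.congr fun k => ?_
    simp only [Function.comp_apply, Real.sqrt_sq_eq_abs]
  have h3 := h2.add (tendsto_const_nhds (x := (1:ℝ)))
  rw [zero_add] at h3
  refine h3.congr fun k => ?_
  rw [sum_Xf_eq E (nk k) ω, add_div, div_self (Hh_nk_pos k).ne']

end Main

/-- For a URI-set `E`, the cardinality of `E ∩ {1,…,n}` (written as a sum of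
indicators) divided by `ln n` converges to `1` almost surely. -/
theorem stmt1 {Ω : Type*} [MeasurableSpace Ω] (μ : Measure Ω) [IsProbabilityMeasure μ]
    (E : ℕ → Set Ω) (hmeas : ∀ n, MeasurableSet (E n))
    (hind : iIndepSet E μ)
    (hprob : ∀ n : ℕ, 1 ≤ n → μ (E n) = 1 / n)
    (hzero : E 0 = ∅) :
    ∀ᵐ ω ∂μ, Tendsto
      (fun n : ℕ => (∑ i ∈ Finset.Icc 1 n, Set.indicator (E i) (fun _ => (1 : ℝ)) ω)
        / Real.log n)
      atTop (nhds 1) := by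
  filter_upwards [subseq_ae μ E hmeas hind hprob] with ω hω
  have hmono : Monotone (fun m => ∑ i ∈ Finset.Icc 1 m, Xf E i ω) := by
    intro a b hab
    apply Finset.sum_le_sum_of_subset_of_nonneg (Finset.Icc_subset_Icc le_rfl hab)
    intro i _ _
    exact Set.indicator_nonneg (fun _ _ => zero_le_one) ω
  have hnonneg : ∀ m, 0 ≤ ∑ i ∈ Finset.Icc 1 m, Xf E i ω := fun m =>
    Finset.sum_nonneg (fun i _ => Set.indicator_nonneg (fun _ _ => zero_le_one) ω)
  have := interp _ hmono hnonneg hω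
  simpa only [Xf] using this
end

section
/- Let E be a URI-set and A ⊆ ℤ_+. If A has natural density α, i.e. (1/n) ∑_{j=1}^n 1_A(j) → α, then A has URI-density α: almost surely, (1/n) ∑_{k=1}^n 1_A(N_k) → α, where N_1 < N_2 < ... are the elements of E. -/
open MeasureTheory ProbabilityTheory Filter

noncomputable def uriH (M : ℕ) : ℝ := ∑ j ∈ Finset.range M, (1:ℝ) / j

noncomputable def uriM (k : ℕ) : ℕ := ⌊Real.exp ((k:ℝ)^2)⌋₊ + k

lemma uriH_mono : Monotone uriH := by
  apply monotone_nat_of_le_succ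
  intro n
  rw [uriH, uriH, Finset.sum_range_succ]
  have : (0:ℝ) ≤ 1 / n := by positivity
  linarith

lemma uriH_succ (M : ℕ) : uriH (M+1) = ∑ n ∈ Finset.range M, (1:ℝ) / (n+1) := by
  rw [uriH, Finset.sum_range_succ']
  push_cast
  simp

lemma uri_log_le_H (M : ℕ) : Real.log M ≤ uriH M := by
  calc Real.log M = ∑ j ∈ Finset.range M, (Real.log ((j+1 : ℕ)) - Real.log (j : ℕ)) := by
        rw [Finset.sum_range_sub (f := fun j => Real.log j)]; simp
    _ ≤ uriH M := by
        apply Finset.sum_le_sum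
        intro j _
        rcases Nat.eq_zero_or_pos j with hj | hj
        · subst hj; simp
        · have hj0 : (0:ℝ) < j := by exact_mod_cast hj
          push_cast
          have heq : Real.log ((j:ℝ)+1) - Real.log j = Real.log (((j:ℝ)+1)/j) := by
            rw [Real.log_div (by positivity) (by positivity)]
          rw [heq]
          have h2 := Real.log_le_sub_one_of_pos (show (0:ℝ) < ((j:ℝ)+1)/j by positivity)
          have h3 : ((j:ℝ)+1)/j - 1 = 1/j := by field_simp; ring
          linarith

lemma uriH_le_log (M : ℕ) : uriH M ≤ Real.log M + 1 := by
  have key : ∀ K : ℕ, uriH (K+2) ≤ Real.log ((K:ℝ)+1) + 1 := by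
    intro K
    induction K with
    | zero => simp [uriH, Finset.sum_range_succ]
    | succ K ih =>
      have hstep : (1:ℝ)/((K:ℝ)+2) ≤ Real.log ((K:ℝ)+2) - Real.log ((K:ℝ)+1) := by
        have h2 := Real.log_le_sub_one_of_pos (show (0:ℝ) < ((K:ℝ)+1)/((K:ℝ)+2) by positivity)
        have heq : Real.log (((K:ℝ)+1)/((K:ℝ)+2)) = Real.log ((K:ℝ)+1) - Real.log ((K:ℝ)+2) := by
          rw [Real.log_div (by positivity) (by positivity)]
        have h3 : ((K:ℝ)+1)/((K:ℝ)+2) - 1 = -(1/((K:ℝ)+2)) := by field_simp; norm_num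
        rw [heq, h3] at h2
        linarith
      have hsum : uriH (K+3) = uriH (K+2) + 1/((K:ℝ)+2) := by
        rw [uriH, uriH, Finset.sum_range_succ]
        push_cast
        norm_num
      have hcast : ((K+1 : ℕ) : ℝ) + 1 = (K:ℝ) + 2 := by push_cast; ring
      calc uriH (K+1+2) = uriH (K+3) := by norm_num
        _ ≤ Real.log ((K:ℝ)+2) + 1 := by linarith
        _ = Real.log (((K+1:ℕ):ℝ)+1) + 1 := by rw [hcast]
  match M with
  | 0 => simp [uriH]
  | 1 => simp [uriH]
  | (K+2) =>
    refine (key K).trans ?_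
    have : Real.log ((K:ℝ)+1) ≤ Real.log ((K:ℝ)+2) :=
      Real.log_le_log (by positivity) (by linarith)
    push_cast
    linarith

lemma uriH_atTop : Tendsto uriH atTop atTop := by
  apply tendsto_atTop_mono uri_log_le_H
  exact Real.tendsto_log_atTop.comp tendsto_natCast_atTop_atTop

lemma uri_abel (a D : ℕ → ℝ) (hD0 : D 0 = 0) (hD : ∀ n, D (n+1) = D n + a n) (M : ℕ) :
    ∑ n ∈ Finset.range M, a n / (n+1)
      = ∑ n ∈ Finset.range M, (D (n+1) / (n+1)) * (1 / (n+2)) + D M / (M+1) := by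
  induction M with
  | zero => simp [hD0]
  | succ M ih =>
    rw [Finset.sum_range_succ, Finset.sum_range_succ, ih, hD M]
    have h1 : ((M:ℝ)+1) ≠ 0 := by positivity
    have h2 : ((M:ℝ)+2) ≠ 0 := by positivity
    push_cast
    field_simp
    ring

lemma uri_sum_nth (p : ℕ → Prop) [DecidablePred p] (f : ℕ → ℝ) (M : ℕ) :
    ∑ k ∈ Finset.range (Nat.count p M), f (Nat.nth p k)
      = ∑ j ∈ Finset.range M, if p j then f j else 0 := by
  induction M with
  | zero => simp
  | succ M ih =>
    rw [Finset.sum_range_succ, Nat.count_succ]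
    by_cases h : p M
    · rw [if_pos h, Finset.sum_range_succ, ih, Nat.nth_count h, if_pos h]
    · simp [h, ih]

lemma uri_bdd_div_atTop {f g : ℕ → ℝ} {C : ℝ} (hf : ∀ n, |f n| ≤ C)
    (hg : Tendsto g atTop atTop) : Tendsto (fun n => f n / g n) atTop (nhds 0) := by
  have h1 : Tendsto (fun n => C / g n) atTop (nhds 0) :=
    Tendsto.div_atTop tendsto_const_nhds hg
  apply squeeze_zero_norm' _ h1
  filter_upwards [hg.eventually_ge_atTop 1] with n hn
  rw [Real.norm_eq_abs, abs_div, abs_of_nonneg (by linarith : (0:ℝ) ≤ g n)]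
  exact div_le_div_of_nonneg_right (hf n) (by linarith)

lemma uri_wcesaro_zero {w c : ℕ → ℝ} (hw : ∀ n, 0 ≤ w n)
    (hW : Tendsto (fun M => ∑ n ∈ Finset.range M, w n) atTop atTop)
    (hc : Tendsto c atTop (nhds 0)) :
    Tendsto (fun M => (∑ n ∈ Finset.range M, c n * w n) / (∑ n ∈ Finset.range M, w n))
      atTop (nhds 0) := by
  rw [Metric.tendsto_atTop]
  intro ε hε
  obtain ⟨N₀, hN₀⟩ := Metric.tendsto_atTop.1 hc (ε/4) (by positivity)
  set K := ∑ n ∈ Finset.range N₀, |c n| * w n with hK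
  have hK0 : 0 ≤ K := Finset.sum_nonneg fun n _ => mul_nonneg (abs_nonneg _) (hw n)
  obtain ⟨N₁, hN₁⟩ := eventually_atTop.1 (hW.eventually_ge_atTop (max 1 (4*K/ε)))
  refine ⟨max N₀ N₁, fun M hM => ?_⟩
  have hMN₀ : N₀ ≤ M := le_trans (le_max_left _ _) hM
  have hWM := hN₁ M (le_trans (le_max_right _ _) hM)
  set W := ∑ n ∈ Finset.range M, w n with hWdef
  have hW1 : (1:ℝ) ≤ W := le_trans (le_max_left _ _) hWM
  have hWK : 4*K/ε ≤ W := le_trans (le_max_right _ _) hWM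
  have hWpos : (0:ℝ) < W := by linarith
  rw [Real.dist_eq, sub_zero, abs_div, abs_of_pos hWpos, div_lt_iff₀ hWpos]
  have habs : |∑ n ∈ Finset.range M, c n * w n| ≤ ∑ n ∈ Finset.range M, |c n| * w n := by
    refine (Finset.abs_sum_le_sum_abs _ _).trans ?_
    apply Finset.sum_le_sum; intro n _; rw [abs_mul, abs_of_nonneg (hw n)]
  have hsplit : ∑ n ∈ Finset.range M, |c n| * w n
      = K + ∑ n ∈ Finset.Ico N₀ M, |c n| * w n :=
    (Finset.sum_range_add_sum_Ico _ hMN₀).symm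
  have htail : ∑ n ∈ Finset.Ico N₀ M, |c n| * w n ≤ (ε/4) * W := by
    calc ∑ n ∈ Finset.Ico N₀ M, |c n| * w n ≤ ∑ n ∈ Finset.Ico N₀ M, (ε/4) * w n := by
          apply Finset.sum_le_sum; intro n hn
          have h2 := hN₀ n (Finset.mem_Ico.1 hn).1
          rw [Real.dist_eq, sub_zero] at h2
          exact mul_le_mul_of_nonneg_right h2.le (hw n)
      _ = (ε/4) * ∑ n ∈ Finset.Ico N₀ M, w n := by rw [Finset.mul_sum]
      _ ≤ (ε/4) * W := by
          apply mul_le_mul_of_nonneg_left _ (by positivity)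
          apply Finset.sum_le_sum_of_subset_of_nonneg
          · intro x hx; exact Finset.mem_range.2 (Finset.mem_Ico.1 hx).2
          · intro n _ _; exact hw n
  have hKW : K ≤ (ε/4) * W := by
    rw [div_le_iff₀ hε] at hWK
    nlinarith
  calc |∑ n ∈ Finset.range M, c n * w n| ≤ K + (ε/4)*W := by
        rw [hsplit] at habs; linarith
    _ < ε * W := by nlinarith

lemma uri_wcesaro {w b : ℕ → ℝ} {α : ℝ} (hw : ∀ n, 0 ≤ w n)
    (hW : Tendsto (fun M => ∑ n ∈ Finset.range M, w n) atTop atTop)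
    (hb : Tendsto b atTop (nhds α)) :
    Tendsto (fun M => (∑ n ∈ Finset.range M, b n * w n) / (∑ n ∈ Finset.range M, w n))
      atTop (nhds α) := by
  have hc : Tendsto (fun n => b n - α) atTop (nhds 0) := by
    simpa using hb.sub_const α
  have h0 := uri_wcesaro_zero hw hW hc
  have heq : ∀ᶠ M in atTop,
      (∑ n ∈ Finset.range M, (b n - α) * w n) / (∑ n ∈ Finset.range M, w n) + α
        = (∑ n ∈ Finset.range M, b n * w n) / (∑ n ∈ Finset.range M, w n) := by
    filter_upwards [hW.eventually_ge_atTop 1] with M hM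
    have hWpos : (0:ℝ) < ∑ n ∈ Finset.range M, w n := by linarith
    have : ∑ n ∈ Finset.range M, (b n - α) * w n
        = (∑ n ∈ Finset.range M, b n * w n) - α * ∑ n ∈ Finset.range M, w n := by
      rw [Finset.mul_sum, ← Finset.sum_sub_distrib]
      congr 1; ext n; ring
    rw [this, sub_div, mul_div_assoc, div_self hWpos.ne', mul_one]
    ring
  have := (h0.add_const α)
  rw [zero_add] at this
  exact Tendsto.congr' heq this

lemma uri_mean_tendsto (A : Set ℕ) (α : ℝ)
    (hnat : Tendsto (fun n : ℕ =>
        (∑ j ∈ Finset.Icc 1 n, Set.indicator A (fun _ => (1:ℝ)) j) / n) atTop (nhds α)) :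
    Tendsto (fun M : ℕ =>
        (∑ j ∈ Finset.range M, Set.indicator A (fun _ => (1:ℝ)) j / j) / uriH M)
      atTop (nhds α) := by
  set a : ℕ → ℝ := fun j => Set.indicator A (fun _ => (1:ℝ)) j with ha
  have ha01 : ∀ j, 0 ≤ a j ∧ a j ≤ 1 := by
    intro j
    by_cases hj : j ∈ A <;> simp [ha, hj]
  set D : ℕ → ℝ := fun n => ∑ j ∈ Finset.Icc 1 n, a j with hDdef
  have hD0 : D 0 = 0 := by simp [hDdef]
  have hDsucc : ∀ n, D (n+1) = D n + a (n+1) := by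
    intro n
    rw [hDdef]
    exact Finset.sum_Icc_succ_top (Nat.succ_le_succ (Nat.zero_le n)) a
  have hDbd : ∀ n, 0 ≤ D n ∧ D n ≤ n := by
    intro n
    constructor
    · exact Finset.sum_nonneg fun j _ => (ha01 j).1
    · calc D n ≤ ∑ j ∈ Finset.Icc 1 n, (1:ℝ) := Finset.sum_le_sum fun j _ => (ha01 j).2
        _ = n := by simp
  -- b and w
  set b : ℕ → ℝ := fun n => D (n+1) / ((n:ℝ)+1) with hb_def
  have hb : Tendsto b atTop (nhds α) := by
    have h := hnat.comp (tendsto_add_atTop_nat 1)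
    apply h.congr
    intro n
    simp only [Function.comp_apply, hb_def]
    push_cast
    rfl
  set w : ℕ → ℝ := fun n => 1 / ((n:ℝ)+2) with hw_def
  have hw : ∀ n, 0 ≤ w n := fun n => by rw [hw_def]; positivity
  set W : ℕ → ℝ := fun M => ∑ n ∈ Finset.range M, w n with hW_def
  have e1 : ∀ n : ℕ, (1:ℝ)/(((n+1:ℕ):ℝ)+1) = w n := by
    intro n; simp only [hw_def]; push_cast; ring
  have hWH : ∀ M, W M = uriH (M+2) - 1 := by
    intro M
    rw [uriH_succ (M+1), Finset.sum_range_succ', Finset.sum_congr rfl (fun n _ => e1 n)]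
    simp only [hW_def]
    norm_num
  have hW : Tendsto W atTop atTop := by
    apply Tendsto.congr (fun M => (hWH M).symm)
    apply tendsto_atTop_add_const_right
    exact uriH_atTop.comp (tendsto_add_atTop_nat 2)
  have h_cesaro := uri_wcesaro hw hW hb
  -- numerator identity
  have hnum : ∀ M, (∑ j ∈ Finset.range (M+1), a j / j)
      = (∑ n ∈ Finset.range M, b n * w n) + D M / ((M:ℝ)+1) := by
    intro M
    have h1 : (∑ j ∈ Finset.range (M+1), a j / j)
        = ∑ n ∈ Finset.range M, a (n+1) / ((n:ℝ)+1) := by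
      rw [Finset.sum_range_succ']
      push_cast
      simp
    rw [h1, uri_abel (fun n => a (n+1)) D hD0 hDsucc M]
  -- ratio W M / uriH (M+1) → 1
  have h_ratio : Tendsto (fun M => W M / uriH (M+1)) atTop (nhds 1) := by
    have hδ : ∀ M, W M / uriH (M+1) = 1 + (W M - uriH (M+1)) / uriH (M+1) ∨ uriH (M+1) = 0 := by
      intro M
      by_cases h : uriH (M+1) = 0
      · right; exact h
      · left; field_simp; ring
    have hbd : ∀ M, |W M - uriH (M+1)| ≤ 1 := by
      intro M
      rw [hWH M]
      have h2 : uriH (M+2) = uriH (M+1) + 1/((M:ℝ)+1) := by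
        rw [uriH_succ (M+1), uriH_succ M, Finset.sum_range_succ]
      rw [h2]
      have h3 : (0:ℝ) < 1/((M:ℝ)+1) := by positivity
      have h4 : 1/((M:ℝ)+1) ≤ 1 := by
        rw [div_le_one (by positivity)]
        linarith [Nat.cast_nonneg (α := ℝ) M]
      rw [abs_le]
      constructor <;> linarith
    have h0 : Tendsto (fun M => (W M - uriH (M+1)) / uriH (M+1)) atTop (nhds 0) :=
      uri_bdd_div_atTop hbd (uriH_atTop.comp (tendsto_add_atTop_nat 1))
    have h1 := h0.const_add 1
    rw [add_zero] at h1
    apply h1.congr'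
    filter_upwards [(uriH_atTop.comp (tendsto_add_atTop_nat 1)).eventually_ge_atTop 1] with M hM
    have hne : uriH (M+1) ≠ 0 := by
      simp only [Function.comp_apply] at hM; intro h; rw [h] at hM; linarith
    field_simp; ring
  -- remainder
  have h_rem : Tendsto (fun M => (D M / ((M:ℝ)+1)) / uriH (M+1)) atTop (nhds 0) := by
    apply uri_bdd_div_atTop (C := 1) _ (uriH_atTop.comp (tendsto_add_atTop_nat 1))
    intro n
    have h1 := (hDbd n).1
    have h2 := (hDbd n).2
    have h3 : (0:ℝ) ≤ (n:ℝ) := Nat.cast_nonneg n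
    rw [abs_div, abs_of_nonneg h1, abs_of_nonneg (by linarith : (0:ℝ) ≤ (n:ℝ)+1),
      div_le_one (by linarith)]
    linarith
  -- combine
  have hmain : Tendsto (fun M =>
      ((∑ n ∈ Finset.range M, b n * w n) / W M) * (W M / uriH (M+1))
        + (D M / ((M:ℝ)+1)) / uriH (M+1)) atTop (nhds α) := by
    have := (h_cesaro.mul h_ratio).add h_rem
    rwa [mul_one, add_zero] at this
  have hshift : Tendsto (fun M => (∑ j ∈ Finset.range (M+1), a j / j) / uriH (M+1))
      atTop (nhds α) := by
    apply hmain.congr'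
    filter_upwards [hW.eventually_ge_atTop 1] with M hM
    have hWne : W M ≠ 0 := by intro h; rw [h] at hM; linarith
    rw [hnum M, add_div]
    congr 1
    rw [div_mul_div_comm, mul_comm (∑ n ∈ Finset.range M, b n * w n) (W M),
      mul_div_mul_left _ _ hWne]
  exact (tendsto_add_atTop_iff_nat 1).1 hshift

lemma uriM_strictMono : StrictMono uriM := by
  apply strictMono_nat_of_lt_succ
  intro k
  have h : ⌊Real.exp ((k:ℝ)^2)⌋₊ ≤ ⌊Real.exp (((k+1:ℕ):ℝ)^2)⌋₊ := by
    apply Nat.floor_mono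
    apply Real.exp_le_exp.2
    push_cast
    nlinarith [Nat.cast_nonneg (α := ℝ) k]
  have e : uriM (k+1) = ⌊Real.exp (((k+1:ℕ):ℝ)^2)⌋₊ + (k+1) := rfl
  rw [uriM, e]
  omega

lemma uriM_pos (k : ℕ) : 0 < uriM k := by
  have h : 1 ≤ ⌊Real.exp ((k:ℝ)^2)⌋₊ := by
    apply Nat.le_floor
    rw [Nat.cast_one]
    exact Real.one_le_exp (by positivity)
  rw [uriM]; omega

lemma uriM_ge (k : ℕ) (hk : 1 ≤ k) : Real.exp ((k:ℝ)^2) ≤ (uriM k : ℝ) := by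
  have h1 : Real.exp ((k:ℝ)^2) - 1 < ⌊Real.exp ((k:ℝ)^2)⌋₊ := Nat.sub_one_lt_floor _
  have h2 : (uriM k : ℝ) = (⌊Real.exp ((k:ℝ)^2)⌋₊ : ℝ) + k := by rw [uriM]; push_cast; ring
  have hk1 : (1:ℝ) ≤ k := by exact_mod_cast hk
  rw [h2]; linarith

lemma uriM_le (k : ℕ) : (uriM k : ℝ) ≤ 2 * Real.exp ((k:ℝ)^2) := by
  have h1 : (⌊Real.exp ((k:ℝ)^2)⌋₊ : ℝ) ≤ Real.exp ((k:ℝ)^2) := Nat.floor_le (by positivity)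
  have h2 : (k:ℝ) ≤ Real.exp ((k:ℝ)^2) := by
    have := Real.add_one_le_exp ((k:ℝ)^2)
    nlinarith [Nat.cast_nonneg (α := ℝ) k]
  have h3 : (uriM k : ℝ) = (⌊Real.exp ((k:ℝ)^2)⌋₊ : ℝ) + k := by rw [uriM]; push_cast; ring
  rw [h3]; linarith

lemma uriH_uriM_ge (k : ℕ) (hk : 1 ≤ k) : ((k:ℝ))^2 ≤ uriH (uriM k) := by
  refine le_trans ?_ (uri_log_le_H _)
  calc ((k:ℝ))^2 = Real.log (Real.exp ((k:ℝ)^2)) := (Real.log_exp _).symm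
    _ ≤ Real.log (uriM k) := Real.log_le_log (Real.exp_pos _) (uriM_ge k hk)

lemma uriH_uriM_le (k : ℕ) : uriH (uriM k) ≤ ((k:ℝ))^2 + 2 := by
  refine (uriH_le_log _).trans ?_
  have hpos : (0:ℝ) < (uriM k : ℝ) := by exact_mod_cast uriM_pos k
  have h1 : Real.log (uriM k) ≤ Real.log (2 * Real.exp ((k:ℝ)^2)) :=
    Real.log_le_log hpos (uriM_le k)
  rw [Real.log_mul (by norm_num) (Real.exp_ne_zero _), Real.log_exp] at h1
  have hlog2 : Real.log 2 ≤ 1 := by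
    have := Real.log_le_sub_one_of_pos (show (0:ℝ) < 2 by norm_num)
    linarith
  linarith

lemma uri_ratio_tendsto :
    Tendsto (fun k => uriH (uriM (k+1)) / uriH (uriM k)) atTop (nhds 1) := by
  have hupper : Tendsto (fun k : ℕ => (((k:ℝ)+1)^2 + 2) / (k:ℝ)^2) atTop (nhds 1) := by
    have t0 : Tendsto (fun k : ℕ => 1/(k:ℝ)) atTop (nhds 0) :=
      tendsto_one_div_atTop_nhds_zero_nat
    have l1 : Tendsto (fun k : ℕ => 1 + (2*(1/(k:ℝ)) + 3*((1/(k:ℝ))*(1/(k:ℝ)))))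
        atTop (nhds (1 + (2*0 + 3*(0*0)))) :=
      tendsto_const_nhds.add ((t0.const_mul 2).add ((t0.mul t0).const_mul 3))
    norm_num at l1
    apply l1.congr'
    filter_upwards [eventually_ge_atTop 1] with k hk
    have hk0 : (k:ℝ) ≠ 0 := by
      have : (0:ℝ) < k := by exact_mod_cast hk
      linarith
    field_simp
    ring
  apply tendsto_of_tendsto_of_tendsto_of_le_of_le' tendsto_const_nhds hupper
  · filter_upwards [eventually_ge_atTop 1] with k hk
    have hk2 : ((k:ℝ))^2 ≤ uriH (uriM k) := uriH_uriM_ge k hk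
    have hk1 : (1:ℝ) ≤ (k:ℝ) := by exact_mod_cast hk
    have hpos : (0:ℝ) < uriH (uriM k) := by nlinarith
    rw [one_le_div hpos]
    exact uriH_mono (uriM_strictMono.monotone (Nat.le_succ k))
  · filter_upwards [eventually_ge_atTop 1] with k hk
    have hk2 : ((k:ℝ))^2 ≤ uriH (uriM k) := uriH_uriM_ge k hk
    have hk1 : (1:ℝ) ≤ (k:ℝ) := by exact_mod_cast hk
    have hpos : (0:ℝ) < (k:ℝ)^2 := by nlinarith
    have hle : uriH (uriM (k+1)) ≤ ((k:ℝ)+1)^2 + 2 := by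
      have := uriH_uriM_le (k+1)
      push_cast at this
      exact this
    exact div_le_div₀ (by positivity) hle hpos hk2

lemma uri_interp {u v : ℕ → ℝ} {α : ℝ} (hu : Monotone u) (hu0 : ∀ n, 0 ≤ u n)
    (hv : Monotone v) (hvT : Tendsto v atTop atTop)
    {M : ℕ → ℕ} (hM : StrictMono M)
    (hA : Tendsto (fun k => u (M k) / v (M k)) atTop (nhds α))
    (hR : Tendsto (fun k => v (M (k+1)) / v (M k)) atTop (nhds 1)) :
    Tendsto (fun m => u m / v m) atTop (nhds α) := by
  classical
  obtain ⟨K₀, hK₀⟩ := eventually_atTop.1 (hvT.eventually_ge_atTop 1)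
  have hvM : ∀ k, K₀ ≤ k → (1:ℝ) ≤ v (M k) := fun k hk =>
    hK₀ _ (le_trans hk hM.le_apply)
  set κ : ℕ → ℕ := fun m => Nat.findGreatest (fun k => M k ≤ m) m with hκdef
  have hMk_le : ∀ m, M 0 ≤ m → M (κ m) ≤ m := fun m hm =>
    Nat.findGreatest_spec (P := fun k => M k ≤ m) (Nat.zero_le m) hm
  have hlt : ∀ m, M 0 ≤ m → m < M (κ m + 1) := by
    intro m hm
    by_contra h
    push_neg at h
    have h2 : κ m + 1 ≤ m := le_trans hM.le_apply h
    exact Nat.findGreatest_is_greatest (lt_add_one (κ m)) h2 h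
  have hκ_atTop : Tendsto κ atTop atTop := by
    rw [tendsto_atTop_atTop]
    intro K
    refine ⟨M K, fun m hm => ?_⟩
    exact Nat.le_findGreatest (le_trans hM.le_apply hm) hm
  set L : ℕ → ℝ := fun k => (u (M k) / v (M k)) * (v (M k) / v (M (k+1))) with hLdef
  set U : ℕ → ℝ := fun k => (u (M (k+1)) / v (M (k+1))) * (v (M (k+1)) / v (M k)) with hUdef
  have hL_lim : Tendsto L atTop (nhds α) := by
    have hinv : Tendsto (fun k => v (M k) / v (M (k+1))) atTop (nhds 1) := by
      have h1 : Tendsto (fun k => (v (M (k+1)) / v (M k))⁻¹) atTop (nhds 1⁻¹) :=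
        hR.inv₀ one_ne_zero
      rw [inv_one] at h1
      apply h1.congr
      intro k
      rw [inv_div]
    simpa using hA.mul hinv
  have hU_lim : Tendsto U atTop (nhds α) := by
    have h1 := (hA.comp (tendsto_add_atTop_nat 1)).mul hR
    rw [mul_one] at h1
    exact h1
  apply tendsto_of_tendsto_of_tendsto_of_le_of_le' (hL_lim.comp hκ_atTop)
    (hU_lim.comp hκ_atTop)
  · filter_upwards [eventually_ge_atTop (M K₀), eventually_ge_atTop K₀,
      eventually_ge_atTop (M 0)] with m hm1 hm2 hm3
    have hkK : K₀ ≤ κ m := Nat.le_findGreatest (le_trans hM.le_apply hm1) hm1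
    have h1 : M (κ m) ≤ m := hMk_le m hm3
    have h2 : m < M (κ m + 1) := hlt m hm3
    have hv1 : (1:ℝ) ≤ v (M (κ m)) := hvM _ hkK
    have hv2 : (1:ℝ) ≤ v (M (κ m + 1)) := hvM _ (le_trans hkK (Nat.le_succ _))
    have hvm : (1:ℝ) ≤ v m := hK₀ m hm2
    show L (κ m) ≤ u m / v m
    have hLeq : L (κ m) = u (M (κ m)) / v (M (κ m + 1)) := by
      simp only [hLdef]
      rw [div_mul_div_comm, mul_comm (u (M (κ m))) (v (M (κ m))),
        mul_div_mul_left _ _ (by linarith : v (M (κ m)) ≠ 0)]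
    rw [hLeq]
    exact div_le_div₀ (hu0 m) (hu h1) (by linarith) (hv h2.le)
  · filter_upwards [eventually_ge_atTop (M K₀), eventually_ge_atTop K₀,
      eventually_ge_atTop (M 0)] with m hm1 hm2 hm3
    have hkK : K₀ ≤ κ m := Nat.le_findGreatest (le_trans hM.le_apply hm1) hm1
    have h1 : M (κ m) ≤ m := hMk_le m hm3
    have h2 : m < M (κ m + 1) := hlt m hm3
    have hv1 : (1:ℝ) ≤ v (M (κ m)) := hvM _ hkK
    have hv2 : (1:ℝ) ≤ v (M (κ m + 1)) := hvM _ (le_trans hkK (Nat.le_succ _))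
    show u m / v m ≤ U (κ m)
    have hUeq : U (κ m) = u (M (κ m + 1)) / v (M (κ m)) := by
      simp only [hUdef]
      rw [div_mul_div_comm, mul_comm (u (M (κ m + 1))) (v (M (κ m + 1))),
        mul_div_mul_left _ _ (by linarith : v (M (κ m + 1)) ≠ 0)]
    rw [hUeq]
    exact div_le_div₀ (hu0 _) (hu h2.le) (by linarith) (hv h1)

lemma uri_main {Ω : Type*} [MeasurableSpace Ω] (μ : Measure Ω) [IsProbabilityMeasure μ]
    (E : ℕ → Set Ω) (hmeas : ∀ n, MeasurableSet (E n)) (hind : iIndepSet E μ)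
    (hprob : ∀ n : ℕ, 1 ≤ n → μ (E n) = 1 / n) (hzero : E 0 = ∅)
    (A : Set ℕ) (α : ℝ)
    (hnat : Tendsto (fun n : ℕ =>
        (∑ j ∈ Finset.Icc 1 n, Set.indicator A (fun _ => (1:ℝ)) j) / n) atTop (nhds α)) :
    ∀ᵐ ω ∂μ, Tendsto (fun M : ℕ =>
        (∑ j ∈ Finset.range M,
          Set.indicator A (fun _ => (1:ℝ)) j * Set.indicator (E j) (fun _ => (1:ℝ)) ω)
          / uriH M) atTop (nhds α) := by
  set a : ℕ → ℝ := fun j => Set.indicator A (fun _ => (1:ℝ)) j with ha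
  have ha01 : ∀ j, 0 ≤ a j ∧ a j ≤ 1 := by
    intro j
    by_cases hj : j ∈ A <;> simp [ha, hj]
  set Y : ℕ → Ω → ℝ := fun j ω => a j * Set.indicator (E j) (fun _ => (1:ℝ)) ω with hY
  have hYind : ∀ j, Y j = Set.indicator (E j) (fun _ => a j) := by
    intro j; funext ω
    by_cases h : ω ∈ E j <;> simp [hY, h]
  have hY0 : ∀ j ω, 0 ≤ Y j ω := by
    intro j ω
    rw [hYind j]
    by_cases h : ω ∈ E j <;> simp [h, (ha01 j).1]
  have hmem : ∀ j, MemLp (Y j) 2 μ := by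
    intro j; rw [hYind j]
    exact memLp_indicator_const 2 (hmeas j) _ (Or.inr (measure_ne_top μ _))
  set w : ℕ → ℝ := fun j => (μ (E j)).toReal with hw
  have hw_eq : ∀ j, w j = 1 / (j:ℝ) := by
    intro j
    rcases Nat.eq_zero_or_pos j with h | h
    · subst h
      show (μ (E 0)).toReal = 1/((0:ℕ):ℝ)
      simp [hzero]
    · show (μ (E j)).toReal = 1/(j:ℝ)
      rw [hprob j h, ENNReal.toReal_div]
      simp
  have hEY : ∀ j, ∫ ω, Y j ω ∂μ = a j * w j := by
    intro j
    rw [hYind j, integral_indicator_const _ (hmeas j), smul_eq_mul, hw, measureReal_def]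
    ring
  have hvar : ∀ j, variance (Y j) μ ≤ w j := by
    intro j
    have h1 : variance (Y j) μ ≤ μ[(Y j)^2] := variance_le_expectation_sq (hmem j).1
    have h2 : (Y j)^2 = Set.indicator (E j) (fun _ => (a j)^2) := by
      funext ω
      by_cases h : ω ∈ E j <;> simp [hY, h]
    have h3 : μ[(Y j)^2] = (μ (E j)).toReal * (a j)^2 := by
      rw [h2, integral_indicator_const _ (hmeas j), smul_eq_mul, measureReal_def]
    rw [h3] at h1
    have h4 : (0:ℝ) ≤ (μ (E j)).toReal := ENNReal.toReal_nonneg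
    have h5 := (ha01 j).1
    have h6 := (ha01 j).2
    show variance (Y j) μ ≤ (μ (E j)).toReal
    have h7 : a j ^ 2 ≤ 1 := by nlinarith
    nlinarith [mul_le_mul_of_nonneg_left h7 h4]
  have hpair : ∀ (i j : ℕ), i ≠ j → IndepFun (Y i) (Y j) μ := by
    intro i j hij
    have h1 := (hind.iIndepFun_indicator (m := (inferInstance : MeasurableSpace ℝ))).indepFun hij
    have h2 : Y i = (fun x : ℝ => a i * x) ∘ (Set.indicator (E i) (fun _ => (1:ℝ))) := by
      funext ω; simp [hY, Function.comp]
    have h3 : Y j = (fun x : ℝ => a j * x) ∘ (Set.indicator (E j) (fun _ => (1:ℝ))) := by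
      funext ω; simp [hY, Function.comp]
    rw [h2, h3]
    exact h1.comp (measurable_const_mul _) (measurable_const_mul _)
  set S : ℕ → Ω → ℝ := fun M ω => ∑ j ∈ Finset.range M, Y j ω with hS
  have hSfun : ∀ M, (fun ω => S M ω) = ∑ j ∈ Finset.range M, Y j := by
    intro M; funext ω; simp [hS, Finset.sum_apply]
  have hSmem : ∀ M, MemLp (fun ω => S M ω) 2 μ := by
    intro M; rw [hSfun]; exact memLp_finset_sum' _ (fun j _ => hmem j)
  have hES : ∀ M, ∫ ω, S M ω ∂μ = ∑ j ∈ Finset.range M, a j * w j := by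
    intro M
    rw [show (fun ω => S M ω) = fun ω => ∑ j ∈ Finset.range M, Y j ω from rfl,
      integral_finset_sum _ (fun j _ => (hmem j).integrable one_le_two)]
    exact Finset.sum_congr rfl fun j _ => hEY j
  have hVarS : ∀ M, variance (fun ω => S M ω) μ ≤ uriH M := by
    intro M
    rw [hSfun M, IndepFun.variance_sum (fun j _ => hmem j)
      (fun i _ j _ hij => hpair i j hij)]
    calc ∑ j ∈ Finset.range M, variance (Y j) μ ≤ ∑ j ∈ Finset.range M, w j :=
        Finset.sum_le_sum fun j _ => hvar j
      _ = uriH M := Finset.sum_congr rfl fun j _ => hw_eq j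
  have hmean : Tendsto (fun M => (∑ j ∈ Finset.range M, a j * w j) / uriH M)
      atTop (nhds α) := by
    apply (uri_mean_tendsto A α hnat).congr
    intro M
    congr 1
    exact Finset.sum_congr rfl fun j _ => by rw [hw_eq j, mul_one_div]
  -- Borel-Cantelli
  have hBC : ∀ q : ℕ, ∀ᵐ ω ∂μ, ∀ᶠ k in atTop,
      |S (uriM (k+1)) ω - ∑ j ∈ Finset.range (uriM (k+1)), a j * w j|
        ≤ (1/((q:ℝ)+1)) * uriH (uriM (k+1)) := by
    intro q
    set ε : ℝ := 1/((q:ℝ)+1) with hε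
    have hεpos : 0 < ε := by positivity
    set B : ℕ → Set Ω := fun k => {ω | ε * uriH (uriM (k+1)) ≤
      |S (uriM (k+1)) ω - ∫ ω', S (uriM (k+1)) ω' ∂μ|} with hB
    have hμB : ∀ k, μ (B k) ≤ ENNReal.ofReal ((((q:ℝ)+1)^2) / ((k:ℝ)+1)^2) := by
      intro k
      have hk1 : (1:ℕ) ≤ k+1 := Nat.succ_le_succ (Nat.zero_le k)
      have hH : ((k:ℝ)+1)^2 ≤ uriH (uriM (k+1)) := by
        have := uriH_uriM_ge (k+1) hk1
        push_cast at this
        exact this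
      have hHpos : 0 < uriH (uriM (k+1)) := lt_of_lt_of_le (by positivity) hH
      have hc : 0 < ε * uriH (uriM (k+1)) := by positivity
      refine le_trans (meas_ge_le_variance_div_sq (hSmem (uriM (k+1))) hc) ?_
      apply ENNReal.ofReal_le_ofReal
      have hvarS := hVarS (uriM (k+1))
      have hvnn : 0 ≤ variance (fun ω => S (uriM (k+1)) ω) μ := variance_nonneg _ _
      set H := uriH (uriM (k+1))
      calc variance (fun ω => S (uriM (k+1)) ω) μ / (ε * H)^2
          ≤ H / (ε * H)^2 := by
            apply div_le_div_of_nonneg_right hvarS (by positivity)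
        _ = ((q:ℝ)+1)^2 / H := by
            rw [hε]; field_simp
        _ ≤ ((q:ℝ)+1)^2 / ((k:ℝ)+1)^2 := by
            apply div_le_div_of_nonneg_left (by positivity) (by positivity) hH
    have hsum1 : Summable (fun k : ℕ => (((q:ℝ)+1)^2) / ((k:ℝ)+1)^2) := by
      have hbase : Summable (fun n : ℕ => 1 / (n:ℝ)^2) :=
        Real.summable_one_div_nat_pow.mpr one_lt_two
      have hshift : Summable (fun k : ℕ => 1 / ((k:ℝ)+1)^2) := by
        have := (summable_nat_add_iff 1).mpr hbase
        apply this.congr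
        intro k
        push_cast
        ring
      have := hshift.mul_left (((q:ℝ)+1)^2)
      apply this.congr
      intro k
      rw [mul_one_div]
    have hsum : (∑' k, μ (B k)) ≠ ⊤ := by
      have h1 : (∑' k, μ (B k)) ≤ ∑' k : ℕ, ENNReal.ofReal ((((q:ℝ)+1)^2) / ((k:ℝ)+1)^2) :=
        ENNReal.tsum_le_tsum hμB
      have h2 : (∑' k : ℕ, ENNReal.ofReal ((((q:ℝ)+1)^2) / ((k:ℝ)+1)^2)) ≠ ⊤ := by
        rw [← ENNReal.ofReal_tsum_of_nonneg (fun k => by positivity) hsum1]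
        exact ENNReal.ofReal_ne_top
      exact ne_top_of_le_ne_top h2 h1
    filter_upwards [ae_eventually_notMem hsum] with ω hω
    filter_upwards [hω] with k hk
    rw [hB] at hk
    simp only [Set.mem_setOf_eq, not_le] at hk
    rw [← hES (uriM (k+1))]
    exact le_of_lt (by simpa [hε] using hk)
  have hae : ∀ᵐ ω ∂μ, ∀ q : ℕ, ∀ᶠ k in atTop,
      |S (uriM (k+1)) ω - ∑ j ∈ Finset.range (uriM (k+1)), a j * w j|
        ≤ (1/((q:ℝ)+1)) * uriH (uriM (k+1)) := (ae_all_iff).2 hBC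
  filter_upwards [hae] with ω hω
  -- deviation tendsto 0 along subsequence
  have hΔ : Tendsto (fun k => (S (uriM k) ω -
      ∑ j ∈ Finset.range (uriM k), a j * w j) / uriH (uriM k)) atTop (nhds 0) := by
    apply (tendsto_add_atTop_iff_nat 1).1
    rw [Metric.tendsto_atTop]
    intro δ hδ
    obtain ⟨q, hq⟩ := exists_nat_one_div_lt hδ
    obtain ⟨N, hN⟩ := eventually_atTop.1 (hω q)
    refine ⟨N, fun k hk => ?_⟩
    have h1 := hN k hk
    have hk1 : (1:ℕ) ≤ k+1 := Nat.succ_le_succ (Nat.zero_le k)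
    have hH : ((k:ℝ)+1)^2 ≤ uriH (uriM (k+1)) := by
      have := uriH_uriM_ge (k+1) hk1
      push_cast at this
      exact this
    have hHpos : 0 < uriH (uriM (k+1)) := lt_of_lt_of_le (by positivity) hH
    rw [Real.dist_eq, sub_zero, abs_div, abs_of_pos hHpos, div_lt_iff₀ hHpos]
    calc |S (uriM (k+1)) ω - ∑ j ∈ Finset.range (uriM (k+1)), a j * w j|
        ≤ (1/((q:ℝ)+1)) * uriH (uriM (k+1)) := h1
      _ < δ * uriH (uriM (k+1)) := by
          apply mul_lt_mul_of_pos_right _ hHpos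
          exact_mod_cast hq
  have hmean_sub : Tendsto (fun k =>
      (∑ j ∈ Finset.range (uriM k), a j * w j) / uriH (uriM k)) atTop (nhds α) :=
    hmean.comp uriM_strictMono.tendsto_atTop
  have hA_sub : Tendsto (fun k => S (uriM k) ω / uriH (uriM k)) atTop (nhds α) := by
    have := hΔ.add hmean_sub
    rw [zero_add] at this
    apply this.congr
    intro k
    rw [← add_div, sub_add_cancel]
  have hu_mono : Monotone (fun M => S M ω) := by
    apply monotone_nat_of_le_succ
    intro M
    simp only [hS, Finset.sum_range_succ]
    have := hY0 M ω
    linarith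
  have hu0 : ∀ M, 0 ≤ S M ω := fun M => Finset.sum_nonneg fun j _ => hY0 j ω
  exact uri_interp hu_mono hu0 uriH_mono uriH_atTop uriM_strictMono hA_sub
    uri_ratio_tendsto

/-- If `A` has natural density `α`, then `A` has URI-density `α`:
almost surely `(1/n) ∑_{k=1}^n 1_A(N_k) → α`, where `N_k` is the `k`-th smallest
element of the URI-set (here `N_{k+1} = Nat.nth (· ∈ E(ω)) k`, 0-indexed). -/
theorem stmt4 {Ω : Type*} [MeasurableSpace Ω] (μ : Measure Ω) [IsProbabilityMeasure μ]
    (E : ℕ → Set Ω) (hmeas : ∀ n, MeasurableSet (E n))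
    (hind : iIndepSet E μ)
    (hprob : ∀ n : ℕ, 1 ≤ n → μ (E n) = 1 / n)
    (hzero : E 0 = ∅)
    (A : Set ℕ) (α : ℝ)
    (hnat : Tendsto (fun n : ℕ =>
        (∑ j ∈ Finset.Icc 1 n, Set.indicator A (fun _ => (1 : ℝ)) j) / n)
      atTop (nhds α)) :
    ∀ᵐ ω ∂μ, Tendsto (fun n : ℕ =>
        (∑ k ∈ Finset.range n,
          Set.indicator A (fun _ => (1 : ℝ)) (Nat.nth (fun m => ω ∈ E m) k)) / n)
      atTop (nhds α) := by
  classical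
  have h1 := uri_main μ E hmeas hind hprob hzero A α hnat
  have hnat_univ : Tendsto (fun n : ℕ =>
      (∑ j ∈ Finset.Icc 1 n, Set.indicator (Set.univ : Set ℕ) (fun _ => (1:ℝ)) j) / n)
      atTop (nhds 1) := by
    apply Tendsto.congr' _ (tendsto_const_nhds (x := (1:ℝ)))
    filter_upwards [eventually_ge_atTop 1] with n hn
    have hsum : (∑ j ∈ Finset.Icc 1 n, Set.indicator (Set.univ : Set ℕ) (fun _ => (1:ℝ)) j)
        = (n : ℝ) := by
      rw [Finset.sum_congr rfl (fun j _ => Set.indicator_of_mem (Set.mem_univ j) _),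
        Finset.sum_const, Nat.card_Icc]
      simp
    rw [hsum]
    have : (0:ℝ) < n := by exact_mod_cast hn
    field_simp
  have h2 := uri_main μ E hmeas hind hprob hzero Set.univ 1 hnat_univ
  filter_upwards [h1, h2] with ω hω1 hω2
  set p : ℕ → Prop := fun m => ω ∈ E m with hp
  set SA : ℕ → ℝ := fun M => ∑ j ∈ Finset.range M,
    Set.indicator A (fun _ => (1:ℝ)) j * Set.indicator (E j) (fun _ => (1:ℝ)) ω with hSA
  have hCeq : ∀ M, (∑ j ∈ Finset.range M,
      Set.indicator (Set.univ : Set ℕ) (fun _ => (1:ℝ)) j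
        * Set.indicator (E j) (fun _ => (1:ℝ)) ω) = (Nat.count p M : ℝ) := by
    intro M
    induction M with
    | zero => simp
    | succ M ih =>
      rw [Finset.sum_range_succ, ih, Nat.count_succ]
      by_cases h : ω ∈ E M
      · have hpM : p M := h
        rw [if_pos hpM]
        push_cast
        simp [h]
      · have hpM : ¬ p M := h
        rw [if_neg hpM]
        simp [h]
  have hω2' : Tendsto (fun M => (Nat.count p M : ℝ) / uriH M) atTop (nhds 1) :=
    hω2.congr (fun M => by rw [hCeq M])
  have hhalf : ∀ᶠ M in atTop, (1:ℝ)/2 ≤ (Nat.count p M : ℝ) / uriH M :=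
    hω2'.eventually (eventually_ge_nhds (by norm_num : (1:ℝ)/2 < 1))
  have hC_atTop : Tendsto (fun M => (Nat.count p M : ℝ)) atTop atTop := by
    apply tendsto_atTop_mono' atTop _ (uriH_atTop.atTop_div_const (by norm_num : (0:ℝ) < 2))
    filter_upwards [hhalf, uriH_atTop.eventually_ge_atTop 1] with M hM hH
    have hHpos : (0:ℝ) < uriH M := by linarith
    have := (le_div_iff₀ hHpos).1 hM
    linarith
  have hp_inf : (setOf p).Infinite := by
    by_contra h
    rw [Set.not_infinite] at h
    obtain ⟨M₀, hM₀⟩ := eventually_atTop.1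
      (hC_atTop.eventually_ge_atTop ((h.toFinset.card : ℝ) + 1))
    have hle := Nat.count_le_card h M₀
    have hle' : ((Nat.count p M₀ : ℕ) : ℝ) ≤ (h.toFinset.card : ℝ) := by exact_mod_cast hle
    have := hM₀ M₀ le_rfl
    linarith
  have hψ : Tendsto (fun M => SA M / (Nat.count p M : ℝ)) atTop (nhds α) := by
    have hdiv := hω1.div hω2' one_ne_zero
    rw [div_one] at hdiv
    apply hdiv.congr'
    filter_upwards [uriH_atTop.eventually_ge_atTop 1, hhalf] with M hH hM
    have hHpos : (0:ℝ) < uriH M := by linarith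
    have hCpos : (0:ℝ) < (Nat.count p M : ℝ) := by
      have := (le_div_iff₀ hHpos).1 hM
      linarith
    rw [hSA]
    simp only [Pi.div_apply]
    field_simp
  rw [← tendsto_add_atTop_iff_nat 1]
  have hcomp : Tendsto (fun n : ℕ => Nat.nth p n + 1) atTop atTop := by
    rw [tendsto_atTop_atTop]
    intro b
    exact ⟨b, fun n hn => le_trans (le_trans hn (Nat.nth_strictMono hp_inf).le_apply)
      (Nat.le_succ _)⟩
  have hfinal := hψ.comp hcomp
  apply hfinal.congr
  intro n
  simp only [Function.comp_apply]
  have hcount : Nat.count p (Nat.nth p n + 1) = n + 1 :=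
    Nat.count_nth_succ_of_infinite hp_inf n
  have hnum : (∑ k ∈ Finset.range (n+1),
      Set.indicator A (fun _ => (1:ℝ)) (Nat.nth p k)) = SA (Nat.nth p n + 1) := by
    calc (∑ k ∈ Finset.range (n+1), Set.indicator A (fun _ => (1:ℝ)) (Nat.nth p k))
        = ∑ k ∈ Finset.range (Nat.count p (Nat.nth p n + 1)),
            Set.indicator A (fun _ => (1:ℝ)) (Nat.nth p k) := by rw [hcount]
      _ = ∑ j ∈ Finset.range (Nat.nth p n + 1),
            if p j then Set.indicator A (fun _ => (1:ℝ)) j else 0 :=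
          uri_sum_nth p _ _
      _ = SA (Nat.nth p n + 1) := by
          rw [hSA]
          refine Finset.sum_congr rfl (fun j _ => ?_)
          by_cases h : ω ∈ E j
          · rw [if_pos (show p j from h)]
            simp [h]
          · rw [if_neg (show ¬ p j from h)]
            simp [h]
  show SA (Nat.nth p n + 1) / (Nat.count p (Nat.nth p n + 1) : ℝ)
    = (∑ k ∈ Finset.range (n+1),
        Set.indicator A (fun _ => (1:ℝ)) (Nat.nth p k)) / ((n+1 : ℕ) : ℝ)
  rw [hnum, hcount]
end

section
/- Let U be uniformly distributed on [0,1], let ν be the distribution on (ℝ/ℤ)^ℓ of the random vector (log_{b_1} U mod 1, ..., log_{b_ℓ} U mod 1), where b_1,...,b_ℓ are integers ≥ 2. Then for any nonzero (m_1,...,m_ℓ) ∈ ℤ^ℓ with θ := m_1/ln b_1 + ... + m_ℓ/ln b_ℓ ≠ 0, the Fourier coefficient of ν at (m_1,...,m_ℓ) equals 1/(1 − 2πiθ), and in particular has modulus strictly less than 1. -/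
open MeasureTheory

/-- Fourier coefficients of the law `ν` on `(ℝ/ℤ)^ℓ` of
`(log_{b_1} U mod 1, …, log_{b_ℓ} U mod 1)`, `U` uniform on `[0,1]`:
at a nonzero frequency `m` with `θ = ∑ m_i/ln b_i ≠ 0` the coefficient equals
`1/(1 − 2πiθ)`, which has modulus `< 1`. -/
theorem stmt8 {ℓ : ℕ} (b : Fin ℓ → ℕ) (hb : ∀ i, 2 ≤ b i)
    (ν : Measure (Fin ℓ → AddCircle (1 : ℝ)))
    (hν : ν = Measure.map
      (fun (u : ℝ) (i : Fin ℓ) => ((Real.log u / Real.log (b i) : ℝ) : AddCircle (1 : ℝ)))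
      (volume.restrict (Set.Ioc (0 : ℝ) 1)))
    (m : Fin ℓ → ℤ) (hm : m ≠ 0)
    (θ : ℝ) (hθ : θ = ∑ i, (m i : ℝ) / Real.log (b i)) (hθ0 : θ ≠ 0) :
    (∫ t : Fin ℓ → AddCircle (1 : ℝ), ∏ i, fourier (-(m i)) (t i) ∂ν)
      = 1 / (1 - 2 * Real.pi * Complex.I * θ)
    ∧ ‖(1 / (1 - 2 * Real.pi * Complex.I * (θ : ℂ)))‖ < 1 := by
  have hθc : (θ : ℂ) = ∑ i, (m i : ℂ) / (Real.log (b i) : ℂ) := by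
    rw [hθ]; push_cast; ring
  set r : ℂ := -(2 * Real.pi * Complex.I * θ) with hr
  have hr1 : r + 1 = 1 - 2 * Real.pi * Complex.I * θ := by ring
  have hrre : r.re = 0 := by simp [hr]
  constructor
  · rw [hν]
    rw [integral_map]
    · have hcongr : ∀ u ∈ Set.Ioc (0:ℝ) 1,
          (∏ i, fourier (-(m i)) (((Real.log u / Real.log (b i) : ℝ) : AddCircle (1:ℝ))))
            = (u : ℂ) ^ r := by
        intro u hu
        have hu0 : (0:ℝ) < u := hu.1
        rw [Complex.cpow_def_of_ne_zero (by exact_mod_cast hu0.ne')]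
        rw [← Complex.ofReal_log hu0.le]
        simp only [fourier_coe_apply]
        rw [← Complex.exp_sum]
        congr 1
        have key : ∀ i : Fin ℓ,
            2 * (Real.pi : ℂ) * Complex.I * ((-(m i) : ℤ) : ℂ)
                * ((Real.log u / Real.log (b i) : ℝ) : ℂ) / ((1 : ℝ) : ℂ)
              = (Real.log u : ℂ) * -(2 * (Real.pi : ℂ) * Complex.I
                * ((m i : ℂ) / ((Real.log (b i) : ℝ) : ℂ))) := by
          intro i; push_cast; ring
        calc (∑ i, 2 * (Real.pi : ℂ) * Complex.I * ((-(m i) : ℤ) : ℂ)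
                * ((Real.log u / Real.log (b i) : ℝ) : ℂ) / ((1 : ℝ) : ℂ))
            = ∑ i, (Real.log u : ℂ) * -(2 * (Real.pi : ℂ) * Complex.I
                * ((m i : ℂ) / ((Real.log (b i) : ℝ) : ℂ))) :=
              Finset.sum_congr rfl fun i _ => key i
          _ = (Real.log u : ℂ) * r := by
              rw [← Finset.mul_sum, Finset.sum_neg_distrib, ← Finset.mul_sum, hr, hθc]
      rw [setIntegral_congr_fun measurableSet_Ioc hcongr]
      rw [← intervalIntegral.integral_of_le (by norm_num : (0:ℝ) ≤ 1)]
      rw [integral_cpow (Or.inl (by rw [hrre]; norm_num))]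
      have hne : r + 1 ≠ 0 := by
        intro h
        have := congrArg Complex.re h
        simp [Complex.add_re, hrre] at this
      rw [Complex.ofReal_one, Complex.ofReal_zero, Complex.one_cpow,
        Complex.zero_cpow hne, hr1]
      simp
    · exact (measurable_pi_lambda _ (fun i =>
        (AddCircle.measurable_mk').comp (Real.measurable_log.div_const _))).aemeasurable
    · exact (Continuous.aestronglyMeasurable (by
        exact continuous_finset_prod _ fun i _ =>
          (fourier (-(m i))).continuous.comp (continuous_apply i)))
  · rw [norm_div, norm_one]
    have h1 : (1:ℝ) < ‖(1 - 2 * Real.pi * Complex.I * (θ : ℂ))‖ := by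
      rw [Complex.norm_def]
      rw [show (1 - 2 * Real.pi * Complex.I * (θ : ℂ)) =
        Complex.mk 1 (-(2 * Real.pi * θ)) by
          apply Complex.ext <;> simp]
      rw [Complex.normSq_mk,
        show (1:ℝ)*1 + -(2*Real.pi*θ) * -(2*Real.pi*θ) = 1 + (2*Real.pi*θ)^2 by ring,
        Real.lt_sqrt (by norm_num)]
      have : 0 < (2 * Real.pi * θ)^2 := by positivity
      nlinarith
    rw [div_lt_one (by linarith)]
    exact h1
end

section
/- Let b_1,...,b_ℓ be integers ≥ 2 such that for all a_1,...,a_ℓ ∈ ℤ, a_1/ln b_1 + ... + a_ℓ/ln b_ℓ = 0 implies a_1 = ... = a_ℓ = 0. Let ν be the law on (ℝ/ℤ)^ℓ of (log_{b_1} U mod 1, ..., log_{b_ℓ} U mod 1) with U uniform on [0,1]. Then the only probability measure μ on (ℝ/ℤ)^ℓ satisfying μ ∗ ν = μ is the Haar (Lebesgue) measure. -/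
open MeasureTheory

open MeasureTheory Complex Set Function
open scoped Real NNReal ENNReal

noncomputable section

namespace Stmt9Aux

variable {ℓ : ℕ}

local instance : Fact ((0:ℝ) < 1) := ⟨one_pos⟩

abbrev Ω (ℓ : ℕ) := Fin ℓ → AddCircle (1 : ℝ)

def E (m : Fin ℓ → ℤ) : C(Ω ℓ, ℂ) :=
  ∏ i, (fourier (m i)).comp ⟨fun x => x i, continuous_apply i⟩

lemma E_apply (m : Fin ℓ → ℤ) (x : Ω ℓ) : E m x = ∏ i, fourier (m i) (x i) := by
  simp [E, ContinuousMap.prod_apply]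

lemma E_zero : E (0 : Fin ℓ → ℤ) = 1 := by
  ext x; simp [E_apply, fourier_zero]

lemma E_add_arg (m : Fin ℓ → ℤ) (x y : Ω ℓ) : E m (x + y) = E m x * E m y := by
  simp only [E_apply, Pi.add_apply]
  rw [← Finset.prod_mul_distrib]
  refine Finset.prod_congr rfl fun i _ => ?_
  simp only [fourier_apply, smul_add, AddCircle.toCircle_add, Circle.coe_mul]

lemma E_mul (m m' : Fin ℓ → ℤ) : E m * E m' = E (m + m') := by
  ext x
  simp only [ContinuousMap.mul_apply, E_apply, Pi.add_apply, ← Finset.prod_mul_distrib]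
  exact Finset.prod_congr rfl fun i _ => (fourier_add (T := 1)).symm

lemma E_star (m : Fin ℓ → ℤ) : star (E m) = E (-m) := by
  ext x
  simp only [ContinuousMap.star_apply, E_apply, star_prod, Pi.neg_apply]
  refine Finset.prod_congr rfl fun i _ => ?_
  rw [show star ((fourier (m i)) (x i)) = (starRingEnd ℂ) ((fourier (m i)) (x i)) from rfl,
    ← fourier_neg (T := 1)]

lemma norm_E_apply (m : Fin ℓ → ℤ) (x : Ω ℓ) : ‖E m x‖ = 1 := by
  simp [E_apply, norm_prod, Circle.norm_coe]

instance : IsProbabilityMeasure (volume : Measure (AddCircle (1:ℝ))) :=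
  ⟨by rw [AddCircle.measure_univ]; norm_num⟩

instance : IsProbabilityMeasure (volume : Measure (Ω ℓ)) := by
  rw [show (volume : Measure (Ω ℓ)) = Measure.pi (fun _ => volume) from rfl]
  infer_instance

open intervalIntegral

lemma integral_fourier_eq_zero {n : ℤ} (hn : n ≠ 0) :
    ∫ x : AddCircle (1:ℝ), fourier n x = 0 := by
  rw [← AddCircle.intervalIntegral_preimage 1 0 (fun z => fourier n z)]
  have h1 : ∀ x : ℝ, fourier n (x : AddCircle (1:ℝ)) = Complex.exp ((2 * π * I * n) * x) := by
    intro x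
    rw [fourier_coe_apply]
    norm_num [mul_assoc]
  simp_rw [h1]
  have hc : (2 * ↑π * I * (n:ℂ)) ≠ 0 := by
    simp [Real.pi_ne_zero, Complex.I_ne_zero, hn]
  rw [integral_exp_mul_complex hc]
  have h2 : Complex.exp (2 * ↑π * I * (n:ℂ) * (((0:ℝ)+1 : ℝ) : ℂ)) = 1 := by
    push_cast
    rw [show (2 * ↑π * I * (n:ℂ) * (0+1)) = (n:ℂ) * (2 * ↑π * I) by ring]
    exact Complex.exp_int_mul_two_pi_mul_I n
  rw [h2]
  norm_num


lemma integral_E_volume {m : Fin ℓ → ℤ} (hm : m ≠ 0) :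
    ∫ x, E m x ∂(volume : Measure (Ω ℓ)) = 0 := by
  simp_rw [E_apply]
  rw [MeasureTheory.integral_fintype_prod_volume_eq_prod
    (f := fun i (z : AddCircle (1:ℝ)) => fourier (m i) z)]
  obtain ⟨i, hi⟩ : ∃ i, m i ≠ 0 := by
    by_contra h
    push_neg at h
    exact hm (funext h)
  exact Finset.prod_eq_zero (Finset.mem_univ i) (integral_fourier_eq_zero hi)

lemma integral_E_conv (μ ν : Measure (Ω ℓ)) [IsProbabilityMeasure μ] [IsProbabilityMeasure ν]
    (m : Fin ℓ → ℤ) :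
    ∫ x, E m x ∂(μ ∗ ν) = (∫ x, E m x ∂μ) * (∫ x, E m x ∂ν) := by
  rw [show μ ∗ ν = Measure.map (fun p : Ω ℓ × Ω ℓ => p.1 + p.2) (μ.prod ν) from rfl]
  rw [integral_map measurable_add.aemeasurable (E m).continuous.aestronglyMeasurable]
  simp_rw [E_add_arg]
  exact integral_prod_mul (fun x => E m x) (fun y => E m y)

lemma measurable_logmap (b : Fin ℓ → ℕ) :
    Measurable (fun (u : ℝ) (i : Fin ℓ) =>
      ((Real.log u / Real.log (b i) : ℝ) : AddCircle (1 : ℝ))) :=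
  measurable_pi_lambda _ fun i =>
    AddCircle.measurable_mk'.comp (Real.measurable_log.div_const _)

instance : IsProbabilityMeasure ((volume : Measure ℝ).restrict (Set.Ioc (0:ℝ) 1)) := by
  constructor
  rw [Measure.restrict_apply_univ]
  simp

lemma integral_E_map (b : Fin ℓ → ℕ) (m : Fin ℓ → ℤ) :
    ∫ x, E m x ∂(Measure.map (fun (u : ℝ) (i : Fin ℓ) =>
        ((Real.log u / Real.log (b i) : ℝ) : AddCircle (1 : ℝ)))
      ((volume : Measure ℝ).restrict (Set.Ioc (0 : ℝ) 1)))
      = (1 + I * (2 * π * (∑ i, (m i : ℝ) / Real.log (b i))))⁻¹ := by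
  set c : ℝ := 2 * π * (∑ i, (m i : ℝ) / Real.log (b i)) with hc
  rw [integral_map (measurable_logmap b).aemeasurable (E m).continuous.aestronglyMeasurable]
  have key : ∀ u ∈ Set.Ioc (0:ℝ) 1,
      E m (fun i => ((Real.log u / Real.log (b i) : ℝ) : AddCircle (1 : ℝ)))
        = (u : ℂ) ^ (I * (c : ℂ)) := by
    intro u hu
    rw [E_apply]
    have h1 : ∀ i : Fin ℓ, fourier (m i)
        (((Real.log u / Real.log (b i) : ℝ) : AddCircle (1:ℝ)))
        = Complex.exp (2 * π * I * (m i) * ((Real.log u / Real.log (b i) : ℝ) : ℂ)) := by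
      intro i
      rw [fourier_coe_apply]
      norm_num
    simp_rw [h1, ← Complex.exp_sum]
    have h2 : ∑ i, 2 * ↑π * I * (m i : ℂ) * ((Real.log u / Real.log (b i) : ℝ) : ℂ)
        = Complex.log (u : ℂ) * (I * (c : ℂ)) := by
      rw [← Complex.ofReal_log hu.1.le, hc]
      push_cast
      simp only [Finset.mul_sum]
      refine Finset.sum_congr rfl fun i _ => ?_
      ring
    rw [h2, ← Complex.cpow_def_of_ne_zero (by exact_mod_cast hu.1.ne')]
  rw [setIntegral_congr_fun measurableSet_Ioc key]
  rw [← intervalIntegral.integral_of_le zero_le_one]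
  rw [integral_cpow (Or.inl (by simp))]
  have hr1 : I * (c : ℂ) + 1 ≠ 0 := by
    intro h
    simpa using congrArg Complex.re h
  rw [Complex.ofReal_one, Complex.ofReal_zero, Complex.one_cpow, Complex.zero_cpow hr1]
  rw [sub_zero, one_div]
  congr 1
  rw [hc]
  simp only [Complex.ofReal_mul, Complex.ofReal_sum, Complex.ofReal_div, Complex.ofReal_intCast,
    Complex.ofReal_ofNat]
  ring

open Submodule in
def EAlg (ℓ : ℕ) : StarSubalgebra ℂ C(Ω ℓ, ℂ) where
  toSubalgebra := Algebra.adjoin ℂ (Set.range (E (ℓ := ℓ)))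
  star_mem' := by
    show Algebra.adjoin ℂ (Set.range (E (ℓ := ℓ))) ≤
      star (Algebra.adjoin ℂ (Set.range (E (ℓ := ℓ))))
    refine Algebra.adjoin_le ?_
    rintro - ⟨m, rfl⟩
    refine Algebra.subset_adjoin ⟨-m, ?_⟩
    exact (E_star m).symm

open Submodule in
lemma EAlg_coe (ℓ : ℕ) :
    Subalgebra.toSubmodule (EAlg ℓ).toSubalgebra = span ℂ (Set.range (E (ℓ := ℓ))) := by
  apply Algebra.adjoin_eq_span_of_subset
  refine Set.Subset.trans ?_ Submodule.subset_span
  intro x hx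
  refine Submonoid.closure_induction (fun _ => id) ⟨0, E_zero⟩ ?_ hx
  rintro - - - - ⟨m, rfl⟩ ⟨n, rfl⟩
  exact ⟨m + n, (E_mul m n).symm⟩

lemma EAlg_separatesPoints (ℓ : ℕ) : (EAlg ℓ).SeparatesPoints := by
  intro x y hxy
  obtain ⟨i, hi⟩ : ∃ i, x i ≠ y i := by
    by_contra h
    push_neg at h
    exact hxy (funext h)
  refine ⟨_, ⟨E (Pi.single i 1), Algebra.subset_adjoin ⟨Pi.single i 1, rfl⟩, rfl⟩, ?_⟩
  have hE : ∀ z : Ω ℓ, E (Pi.single i 1) z = fourier 1 (z i) := by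
    intro z
    rw [E_apply]
    refine Fintype.prod_eq_single i ?_ |>.trans (by rw [Pi.single_eq_same])
    intro j hj
    rw [Pi.single_eq_of_ne hj]
    exact fourier_zero
  dsimp only
  rw [hE, hE, fourier_one, fourier_one]
  intro hco
  exact hi (AddCircle.injective_toCircle one_ne_zero (Subtype.coe_inj.mp hco))

lemma EAlg_closure_eq_top (ℓ : ℕ) : (EAlg ℓ).topologicalClosure = ⊤ :=
  ContinuousMap.starSubalgebra_topologicalClosure_eq_top_of_separatesPoints _
    (EAlg_separatesPoints ℓ)

lemma integrable_cont (ρ : Measure (Ω ℓ)) [IsFiniteMeasure ρ] (g : C(Ω ℓ, ℂ)) :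
    Integrable g ρ :=
  (BoundedContinuousFunction.integrable ρ (BoundedContinuousFunction.mkOfCompact g) : _)

lemma integral_eq_of_char (μ : Measure (Ω ℓ)) [IsProbabilityMeasure μ]
    (h : ∀ m : Fin ℓ → ℤ, ∫ x, E m x ∂μ = ∫ x, E m x ∂(volume : Measure (Ω ℓ)))
    (f : C(Ω ℓ, ℂ)) : ∫ x, f x ∂μ = ∫ x, f x ∂(volume : Measure (Ω ℓ)) := by
  have lip : ∀ (ρ : Measure (Ω ℓ)) [IsProbabilityMeasure ρ],
      Continuous fun g : C(Ω ℓ, ℂ) => ∫ x, g x ∂ρ := by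
    intro ρ _
    refine (LipschitzWith.of_dist_le_mul (K := 1) fun g₁ g₂ => ?_).continuous
    rw [NNReal.coe_one, one_mul, dist_eq_norm, dist_eq_norm,
      ← integral_sub (integrable_cont ρ g₁) (integrable_cont ρ g₂)]
    calc ‖∫ x, (g₁ x - g₂ x) ∂ρ‖
        = ‖∫ x, (BoundedContinuousFunction.mkOfCompact (g₁ - g₂)) x ∂ρ‖ := rfl
      _ ≤ ‖BoundedContinuousFunction.mkOfCompact (g₁ - g₂)‖ :=
          BoundedContinuousFunction.norm_integral_le_norm ρ _
      _ = ‖g₁ - g₂‖ := BoundedContinuousFunction.norm_mkOfCompact _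
  let L : C(Ω ℓ, ℂ) →ₗ[ℂ] ℂ :=
    { toFun := fun g => (∫ x, g x ∂μ) - ∫ x, g x ∂(volume : Measure (Ω ℓ))
      map_add' := fun g₁ g₂ => by
        simp only [ContinuousMap.add_apply,
          integral_add (integrable_cont _ g₁) (integrable_cont _ g₂)]
        ring
      map_smul' := fun c g => by
        simp only [ContinuousMap.smul_apply, smul_eq_mul, MeasureTheory.integral_const_mul,
          RingHom.id_apply]
        ring }
  have hLcont : Continuous L := ((lip μ).sub (lip volume))
  have hker : (EAlg ℓ : Set C(Ω ℓ, ℂ)) ⊆ (LinearMap.ker L : Set C(Ω ℓ, ℂ)) := by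
    intro g hg
    have : g ∈ Submodule.span ℂ (Set.range (E (ℓ := ℓ))) := by
      rw [← EAlg_coe ℓ]
      exact hg
    refine Submodule.span_le.mpr ?_ this
    rintro - ⟨m, rfl⟩
    simp only [SetLike.mem_coe, LinearMap.mem_ker]
    exact sub_eq_zero.mpr (h m)
  have hclosed : IsClosed (LinearMap.ker L : Set C(Ω ℓ, ℂ)) :=
    (isClosed_singleton (x := (0:ℂ))).preimage hLcont
  have hf : f ∈ (EAlg ℓ).topologicalClosure := by
    rw [EAlg_closure_eq_top]
    trivial
  have : f ∈ (LinearMap.ker L : Set C(Ω ℓ, ℂ)) :=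
    closure_minimal hker hclosed hf
  simpa [L, sub_eq_zero] using this

lemma measure_eq_volume (μ : Measure (Ω ℓ)) [IsProbabilityMeasure μ]
    (h : ∀ m : Fin ℓ → ℤ, ∫ x, E m x ∂μ = ∫ x, E m x ∂(volume : Measure (Ω ℓ))) :
    μ = (volume : Measure (Ω ℓ)) := by
  apply ext_of_forall_lintegral_eq_of_IsFiniteMeasure
  intro f
  have hreal : ∫ x, ((f x : ℝ)) ∂μ = ∫ x, ((f x : ℝ)) ∂(volume : Measure (Ω ℓ)) := by
    have hc : Continuous fun x : Ω ℓ => ((f x : ℝ) : ℂ) :=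
      Complex.continuous_ofReal.comp (NNReal.continuous_coe.comp f.continuous)
    have h2 := integral_eq_of_char μ h ⟨fun x => ((f x : ℝ) : ℂ), hc⟩
    simp only [ContinuousMap.coe_mk] at h2
    have key : ∀ (ρ : Measure (Ω ℓ)) [IsProbabilityMeasure ρ],
        ∫ x, ((f x : ℝ) : ℂ) ∂ρ = ((∫ x, (f x : ℝ) ∂ρ : ℝ) : ℂ) := by
      intro ρ _
      have hint : Integrable (fun x => (f x : ℝ)) ρ :=
        BoundedContinuousFunction.integrable_of_nnreal ρ f
      simpa using (ContinuousLinearMap.integral_comp_comm Complex.ofRealCLM hint)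
    rw [key μ, key (volume : Measure (Ω ℓ))] at h2
    exact_mod_cast h2
  rw [lintegral_coe_eq_integral _ (BoundedContinuousFunction.integrable_of_nnreal μ f),
    lintegral_coe_eq_integral _ (BoundedContinuousFunction.integrable_of_nnreal _ f)]
  rw [hreal]

end Stmt9Aux

end

open Stmt9Aux in
/-- If `b_1,…,b_ℓ ≥ 2` satisfy the rational independence of `1/ln b_i`, and `ν` is
the law on `(ℝ/ℤ)^ℓ` of `(log_{b_i} U mod 1)_i` with `U` uniform on `[0,1]`, then
the only probability measure `μ` with `μ ∗ ν = μ` is the Haar (Lebesgue) measure. -/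
theorem stmt9 {ℓ : ℕ} (b : Fin ℓ → ℕ) (hb : ∀ i, 2 ≤ b i)
    (hindep : ∀ a : Fin ℓ → ℤ, (∑ i, (a i : ℝ) / Real.log (b i)) = 0 → a = 0)
    (ν : Measure (Fin ℓ → AddCircle (1 : ℝ)))
    (hν : ν = Measure.map
      (fun (u : ℝ) (i : Fin ℓ) => ((Real.log u / Real.log (b i) : ℝ) : AddCircle (1 : ℝ)))
      (volume.restrict (Set.Ioc (0 : ℝ) 1)))
    (μ : Measure (Fin ℓ → AddCircle (1 : ℝ))) [IsProbabilityMeasure μ]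
    (hinv : μ ∗ ν = μ) :
    μ = volume := by
  haveI : IsProbabilityMeasure ν := by
    rw [hν]
    exact Measure.isProbabilityMeasure_map (measurable_logmap b).aemeasurable
  apply measure_eq_volume μ
  intro m
  by_cases hm : m = 0
  · subst hm
    rw [E_zero]
    simp
  · rw [integral_E_volume hm]
    have hconv := integral_E_conv μ ν m
    rw [hinv] at hconv
    have hν1 : ∫ x, E m x ∂ν
        = (1 + Complex.I * (2 * Real.pi * (∑ i, (m i : ℝ) / Real.log (b i))))⁻¹ := by
      rw [hν]; exact integral_E_map b m
    have hne : (∫ x, E m x ∂ν) ≠ 1 := by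
      rw [hν1]
      intro hx
      rw [inv_eq_one] at hx
      have h0 : Complex.I * (2 * (Real.pi : ℂ) *
          ((∑ i, (m i : ℝ) / Real.log (b i) : ℝ) : ℂ)) = 0 := by
        linear_combination hx
      simp only [mul_eq_zero, Complex.I_ne_zero, false_or, Complex.ofReal_eq_zero,
        OfNat.ofNat_ne_zero, Complex.ofReal_ne_zero.mpr Real.pi_ne_zero] at h0
      exact hm (hindep m h0)
    have hzero : (∫ x, E m x ∂μ) * (1 - ∫ x, E m x ∂ν) = 0 := by
      linear_combination hconv
    rcases mul_eq_zero.mp hzero with h0 | h1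
    · exact h0
    · exact absurd (sub_eq_zero.mp h1).symm hne
end

section
/- Let E be a URI-set with elements N_1 = 1 < N_2 < ..., and for n ≥ 1, k ≥ 1 let P_k(n) = P(N_k = n). Then for all 2 ≤ k ≤ n, P_k(n) = ((n−2)/n)·P_k(n−1) + (1/n)·P_{k−1}(n−1). -/
open MeasureTheory ProbabilityTheory MeasurableSpace

section Aux

lemma nth_eq_iff_count' {p : ℕ → Prop} [DecidablePred p] {j n : ℕ} (hn : n ≠ 0) :
    Nat.nth p j = n ↔ p n ∧ Nat.count p n = j := by
  constructor
  · intro h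
    have hne : Nat.nth p j ≠ 0 := by rw [h]; exact hn
    have hp : p n := h ▸ Nat.nth_mem_of_ne_zero hne
    refine ⟨hp, ?_⟩
    have := Nat.count_nth (p := p) (n := j)
      (fun hf => Nat.lt_card_toFinset_of_nth_ne_zero hne hf)
    rw [h] at this; exact this
  · rintro ⟨hp, hc⟩
    rw [← hc]; exact Nat.nth_count hp

variable {Ω : Type*} [MeasurableSpace Ω]

/-- count of indices `i < m` with `ω ∈ E i`, as a sum of indicators. -/
noncomputable def cnt (E : ℕ → Set Ω) (m : ℕ) (ω : Ω) : ℕ :=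
  ∑ i ∈ Finset.range m, (E i).indicator 1 ω

lemma cnt_succ (E : ℕ → Set Ω) (m : ℕ) (ω : Ω) :
    cnt E (m + 1) ω = cnt E m ω + (E m).indicator 1 ω :=
  Finset.sum_range_succ _ _

variable (μ : Measure Ω) [IsProbabilityMeasure μ] (E : ℕ → Set Ω)

lemma indep_cnt (hmeas : ∀ n, MeasurableSet (E n)) (hind : iIndepSet E μ)
    (m j : ℕ) {B : Set Ω} (hB : MeasurableSet[generateFrom {E m}] B) :
    μ ({ω | cnt E m ω = j} ∩ B) = μ {ω | cnt E m ω = j} * μ B := by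
  have hle : ∀ i, generateFrom {E i} ≤ (inferInstance : MeasurableSpace Ω) := by
    intro i
    refine generateFrom_le ?_
    rintro t rfl
    exact hmeas i
  have hindep' : iIndep (fun i => generateFrom {E i}) μ :=
    (iIndepSet_iff_iIndep E μ).1 hind
  have hIndep : Indep (⨆ i ∈ {i : ℕ | i < m}, generateFrom {E i})
      (generateFrom {E m}) μ := by
    have h1 := indep_biSup_compl hle hindep' {i : ℕ | i < m}
    refine indep_of_indep_of_le_right h1 ?_
    refine le_biSup (fun i => generateFrom {E i}) ?_
    simp
  have hmeasM : ∀ i < m,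
      MeasurableSet[⨆ i ∈ {i : ℕ | i < m}, generateFrom {E i}] (E i) := by
    intro i hi
    exact le_biSup (fun i => generateFrom {E i}) (show i ∈ {i : ℕ | i < m} from hi)
      _ (measurableSet_generateFrom rfl)
  have hc : Measurable[⨆ i ∈ {i : ℕ | i < m}, generateFrom {E i}] (cnt E m) := by
    apply Finset.measurable_sum
    intro i hi
    exact Measurable.indicator measurable_const (hmeasM i (Finset.mem_range.1 hi))
  have hset : MeasurableSet[⨆ i ∈ {i : ℕ | i < m}, generateFrom {E i}]
      {ω | cnt E m ω = j} := hc (measurableSet_singleton j)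
  exact (Indep_iff _ _ _).1 hIndep _ _ hset hB

lemma cnt_succ_split (m j : ℕ) (hj : 1 ≤ j) :
    {ω | cnt E (m + 1) ω = j}
      = ({ω | cnt E m ω = j} ∩ (E m)ᶜ) ∪ ({ω | cnt E m ω = j - 1} ∩ E m) := by
  ext ω
  by_cases h : ω ∈ E m <;>
    simp [cnt_succ, Set.indicator_apply, h] <;> omega

lemma meas_cnt_succ (hmeas : ∀ n, MeasurableSet (E n)) (hind : iIndepSet E μ)
    (m j : ℕ) (hj : 1 ≤ j) :
    μ {ω | cnt E (m + 1) ω = j}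
      = μ {ω | cnt E m ω = j} * μ (E m)ᶜ + μ {ω | cnt E m ω = j - 1} * μ (E m) := by
  rw [cnt_succ_split E m j hj]
  have hd : Disjoint ({ω | cnt E m ω = j} ∩ (E m)ᶜ) ({ω | cnt E m ω = j - 1} ∩ E m) := by
    apply Set.disjoint_of_subset Set.inter_subset_right Set.inter_subset_right
    exact disjoint_compl_left
  have hcm : Measurable (cnt E m) := by
    apply Finset.measurable_sum
    intro i _
    exact Measurable.indicator measurable_const (hmeas i)
  rw [measure_union hd ((hcm (measurableSet_singleton _)).inter (hmeas m))]
  rw [indep_cnt μ E hmeas hind m j ((show MeasurableSet[MeasurableSpace.generateFrom {E m}] (E m) from measurableSet_generateFrom rfl).compl),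
    indep_cnt μ E hmeas hind m (j - 1) (measurableSet_generateFrom rfl)]

lemma nth_set_eq (hzero : E 0 = ∅) (j n : ℕ) (hn : n ≠ 0) :
    {ω | Nat.nth (fun m => ω ∈ E m) j = n} = {ω | cnt E n ω = j} ∩ E n := by
  classical
  ext ω
  rw [Set.mem_setOf_eq, nth_eq_iff_count' hn]
  have hcount : Nat.count (fun m => ω ∈ E m) n = cnt E n ω := by
    rw [Nat.count_eq_card_filter_range, Finset.card_filter, cnt]
    refine Finset.sum_congr rfl fun i _ => ?_
    simp [Set.indicator_apply]
  rw [hcount]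
  simp only [Set.mem_inter_iff, Set.mem_setOf_eq]
  tauto

end Aux

/-- For a URI-set with ordered elements `N_1 = 1 < N_2 < …` (where
`N_k(ω) = Nat.nth (· ∈ E(ω)) (k-1)`), the distribution `P_k(n) = P(N_k = n)`
satisfies, for `2 ≤ k ≤ n`,
`P_k(n) = ((n-2)/n)·P_k(n-1) + (1/n)·P_{k-1}(n-1)`. -/
theorem stmt13 {Ω : Type*} [MeasurableSpace Ω] (μ : Measure Ω) [IsProbabilityMeasure μ]
    (E : ℕ → Set Ω) (hmeas : ∀ n, MeasurableSet (E n))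
    (hind : iIndepSet E μ)
    (hprob : ∀ n : ℕ, 1 ≤ n → μ (E n) = 1 / n)
    (hzero : E 0 = ∅)
    (k n : ℕ) (hk : 2 ≤ k) (hkn : k ≤ n) :
    (μ {ω | Nat.nth (fun m => ω ∈ E m) (k - 1) = n}).toReal
      = (((n : ℝ) - 2) / n) * (μ {ω | Nat.nth (fun m => ω ∈ E m) (k - 1) = n - 1}).toReal
        + (1 / n) * (μ {ω | Nat.nth (fun m => ω ∈ E m) (k - 2) = n - 1}).toReal := by
  have hn2 : 2 ≤ n := hk.trans hkn
  have hn0 : n ≠ 0 := by omega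
  have hn10 : n - 1 ≠ 0 := by omega
  -- rewrite all three events
  rw [nth_set_eq E hzero (k - 1) n hn0, nth_set_eq E hzero (k - 1) (n - 1) hn10,
    nth_set_eq E hzero (k - 2) (n - 1) hn10]
  -- independence factorizations
  have h1 : μ ({ω | cnt E n ω = k - 1} ∩ E n)
      = μ {ω | cnt E n ω = k - 1} * μ (E n) :=
    indep_cnt μ E hmeas hind n (k - 1) (measurableSet_generateFrom rfl)
  have h2 : μ ({ω | cnt E (n - 1) ω = k - 1} ∩ E (n - 1))
      = μ {ω | cnt E (n - 1) ω = k - 1} * μ (E (n - 1)) :=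
    indep_cnt μ E hmeas hind (n - 1) (k - 1) (measurableSet_generateFrom rfl)
  have h3 : μ ({ω | cnt E (n - 1) ω = k - 2} ∩ E (n - 1))
      = μ {ω | cnt E (n - 1) ω = k - 2} * μ (E (n - 1)) :=
    indep_cnt μ E hmeas hind (n - 1) (k - 2) (measurableSet_generateFrom rfl)
  -- recursion for the count at level n
  have hrec : μ {ω | cnt E n ω = k - 1}
      = μ {ω | cnt E (n - 1) ω = k - 1} * μ (E (n - 1))ᶜ
        + μ {ω | cnt E (n - 1) ω = k - 2} * μ (E (n - 1)) := by
    have hn' : n = (n - 1) + 1 := by omega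
    have := meas_cnt_succ μ E hmeas hind (n - 1) (k - 1) (by omega)
    rw [← hn'] at this
    have hk2 : k - 1 - 1 = k - 2 := by omega
    rw [hk2] at this
    exact this
  rw [h1, h2, h3, hrec]
  -- numeric values
  set a : ℝ := (μ {ω | cnt E (n - 1) ω = k - 1}).toReal with ha
  set b : ℝ := (μ {ω | cnt E (n - 1) ω = k - 2}).toReal with hb
  have hfin : ∀ s : Set Ω, μ s ≠ ⊤ := fun s => measure_ne_top μ s
  have hEnR : (μ (E n)).toReal = 1 / (n : ℝ) := by
    rw [hprob n (by omega)]
    simp [ENNReal.toReal_div]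
  have hEn1R : (μ (E (n - 1))).toReal = 1 / ((n : ℝ) - 1) := by
    rw [hprob (n - 1) (by omega), ENNReal.toReal_div, ENNReal.toReal_one,
      ENNReal.toReal_natCast, Nat.cast_sub (show 1 ≤ n by omega), Nat.cast_one]
  have hEn1cR : (μ (E (n - 1))ᶜ).toReal = 1 - 1 / ((n : ℝ) - 1) := by
    rw [prob_compl_eq_one_sub (hmeas (n - 1))]
    rw [ENNReal.toReal_sub_of_le prob_le_one ENNReal.one_ne_top]
    rw [hEn1R]; simp
  rw [ENNReal.toReal_mul, ENNReal.toReal_add (by finiteness) (by finiteness)]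
  simp only [ENNReal.toReal_mul]
  rw [hEnR, hEn1R, hEn1cR, ← ha, ← hb]
  have hnR : (2 : ℝ) ≤ (n : ℝ) := by exact_mod_cast hn2
  have hne1 : (n : ℝ) - 1 ≠ 0 := by linarith
  have hne : (n : ℝ) ≠ 0 := by linarith
  field_simp
  ring
end

section
/- Let (P_k)_{k≥1} be a sequence of probability distributions on ℤ_+ such that for each k there exists n_k with: (i) n ↦ P_k(n) is non-decreasing on {1,...,n_k} and non-increasing on {n_k, n_k+1,...}; and (ii) for every integer m ≥ 1, P_k(m·n_k)/P_k(n_k) → 1 as k → ∞. Then for any A ⊆ ℤ_+ possessing natural density α (i.e., (1/n) ∑_{j=1}^n 1_A(j) → α), one has P_k(A) → α as k → ∞. -/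
open Filter

private lemma abel_aux16 (q f : ℕ → ℝ) (T : ℕ) :
    ∑ j ∈ Finset.range T, f j * q j
      = (∑ t ∈ Finset.range T, (q t - q (t+1)) * (∑ j ∈ Finset.range (t+1), f j))
        + q T * ∑ j ∈ Finset.range T, f j := by
  induction T with
  | zero => simp
  | succ T ih =>
      rw [Finset.sum_range_succ, ih, Finset.sum_range_succ
        (fun t => (q t - q (t+1)) * (∑ j ∈ Finset.range (t+1), f j)),
        Finset.sum_range_succ f]
      ring

set_option maxHeartbeats 1600000

/-- Let `(P_k)` be probability distributions on the positive integers such that for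
each `k` there is a mode `nk k ≥ 1` with `P_k` non-decreasing before it and
non-increasing after it, and such that `P_k(m·nk k)/P_k(nk k) → 1` for every fixed
`m ≥ 1`.  Then `P_k(A) → α` for every set `A` of natural density `α`. -/
theorem stmt16 (P : ℕ → ℕ → ℝ)
    (hnonneg : ∀ k n, 0 ≤ P k n)
    (hzero : ∀ k, P k 0 = 0)
    (hsum : ∀ k, HasSum (P k) 1)
    (nk : ℕ → ℕ) (hnk : ∀ k, 1 ≤ nk k)
    (hmono₁ : ∀ k m n, 1 ≤ m → m ≤ n → n ≤ nk k → P k m ≤ P k n)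
    (hmono₂ : ∀ k m n, nk k ≤ m → m ≤ n → P k n ≤ P k m)
    (hratio : ∀ m : ℕ, 1 ≤ m →
      Tendsto (fun k => P k (m * nk k) / P k (nk k)) atTop (nhds 1))
    (A : Set ℕ) (α : ℝ)
    (hA : Tendsto (fun n : ℕ =>
        (∑ j ∈ Finset.Icc 1 n, Set.indicator A (fun _ => (1 : ℝ)) j) / n)
      atTop (nhds α)) :
    Tendsto (fun k => ∑' n, Set.indicator A (P k) n) atTop (nhds α) := by
  classical
  set ind : ℕ → ℝ := Set.indicator A (fun _ => (1:ℝ)) with hind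
  have hind0 : ∀ n, 0 ≤ ind n := by
    intro n; by_cases h : n ∈ A <;> simp [hind, Set.indicator_apply, h]
  have hind1 : ∀ n, ind n ≤ 1 := by
    intro n; by_cases h : n ∈ A <;> simp [hind, Set.indicator_apply, h]
  have hPsum : ∀ k, Summable (P k) := fun k => (hsum k).summable
  have htsum : ∀ k, ∑' n, P k n = 1 := fun k => (hsum k).tsum_eq
  have hmax : ∀ k n, P k n ≤ P k (nk k) := by
    intro k n
    rcases Nat.lt_or_ge n 1 with h | h
    · interval_cases n
      rw [hzero]; exact hnonneg k _
    rcases le_or_gt n (nk k) with h2 | h2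
    · exact hmono₁ k n (nk k) h h2 le_rfl
    · exact hmono₂ k (nk k) n le_rfl h2.le
  have hg_eq : ∀ k n, Set.indicator A (P k) n = ind n * P k n := by
    intro k n; by_cases h : n ∈ A <;> simp [hind, Set.indicator_apply, h]
  -- Key fact: nk k * P k (nk k) → 0
  have hstar : Tendsto (fun k => (nk k : ℝ) * P k (nk k)) atTop (nhds 0) := by
    rw [Metric.tendsto_nhds]
    intro ε hε
    set m : ℕ := ⌈2/ε⌉₊ + 2 with hm
    have hm1 : 1 ≤ m := by omega
    have hmR : 2/ε + 2 ≤ (m : ℝ) := by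
      have h0 := Nat.le_ceil (2/ε)
      push_cast [hm]
      linarith only [h0]
    filter_upwards [(hratio m hm1).eventually_const_lt (by norm_num : (1:ℝ)/2 < 1)] with k hk
    rw [Real.dist_eq, sub_zero, abs_of_nonneg (mul_nonneg (Nat.cast_nonneg _) (hnonneg k _))]
    set c := P k (nk k) with hc
    have hc0 : 0 < c := by
      rcases (hnonneg k (nk k)).lt_or_eq with h | h
      · exact h
      · exfalso; rw [hc, ← h, div_zero] at hk; norm_num at hk
    have hPm : (1/2) * c ≤ P k (m * nk k) := by
      rw [lt_div_iff₀ hc0] at hk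
      linarith
    have hcount : ∀ j ∈ Finset.Icc (nk k) (m * nk k), (1/2) * c ≤ P k j := by
      intro j hj
      rw [Finset.mem_Icc] at hj
      exact le_trans hPm (hmono₂ k j (m * nk k) hj.1 hj.2)
    have hsumle : (Finset.Icc (nk k) (m * nk k)).card • ((1/2) * c)
        ≤ ∑ j ∈ Finset.Icc (nk k) (m * nk k), P k j :=
      Finset.card_nsmul_le_sum _ _ _ hcount
    have h1 : ∑ j ∈ Finset.Icc (nk k) (m * nk k), P k j ≤ 1 := by
      rw [← htsum k]
      exact Summable.sum_le_tsum _ (fun i _ => hnonneg k i) (hPsum k)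
    have hcard : (m - 1) * nk k + 1 ≤ (Finset.Icc (nk k) (m * nk k)).card := by
      rw [Nat.card_Icc]
      have h2 : nk k ≤ m * nk k := Nat.le_mul_of_pos_left _ (by omega)
      have h3 : (m - 1) * nk k = m * nk k - 1 * nk k := (Nat.sub_mul m 1 (nk k))
      omega
    have hcardR : ((m:ℝ) - 1) * (nk k : ℝ) * ((1/2)*c) ≤ 1 := by
      have h4 : (((m - 1) * nk k + 1 : ℕ) : ℝ) * ((1/2)*c)
          ≤ ((Finset.Icc (nk k) (m * nk k)).card : ℝ) * ((1/2)*c) := by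
        apply mul_le_mul_of_nonneg_right _ (by positivity)
        exact_mod_cast hcard
      rw [nsmul_eq_mul] at hsumle
      have h5 : ((m:ℝ) - 1) * (nk k:ℝ) * ((1/2)*c) ≤ (((m - 1) * nk k + 1 : ℕ) : ℝ) * ((1/2)*c) := by
        apply mul_le_mul_of_nonneg_right _ (by positivity)
        push_cast [Nat.cast_sub hm1]
        linarith only [hc0.le]
      linarith
    have hnk1 : (1:ℝ) ≤ (nk k : ℝ) := by exact_mod_cast hnk k
    have h2ε : (2/ε) * ε = 2 := div_mul_cancel₀ _ (ne_of_gt hε)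
    have hm2 : 2 + ε ≤ ((m:ℝ) - 1) * ε := by
      have hprod := mul_nonneg (show (0:ℝ) ≤ (m:ℝ) - 2/ε - 2 by linarith only [hmR]) hε.le
      linarith only [hprod, h2ε, hε]
    by_contra hcon
    push_neg at hcon
    have hd : (0:ℝ) ≤ 2/ε := by positivity
    have hm3 : (0:ℝ) ≤ (m:ℝ) - 1 := by linarith
    have h6 := mul_le_mul_of_nonneg_left hcon hm3
    linarith only [h6, hcardR, hm2, hε]
  -- Setup for the main estimate
  set Ac : ℕ → ℝ := fun n => ∑ j ∈ Finset.Icc 1 n, ind j with hAcdef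
  have hAc_nonneg : ∀ n, 0 ≤ Ac n := fun n => Finset.sum_nonneg fun j _ => hind0 j
  have hAc_le : ∀ n : ℕ, Ac n ≤ n := by
    intro n
    calc Ac n ≤ (Finset.Icc 1 n).card • (1:ℝ) :=
          Finset.sum_le_card_nsmul _ _ _ (fun j _ => hind1 j)
      _ = n := by simp [Nat.card_Icc]
  rw [Metric.tendsto_nhds]
  intro ε hε
  set C : ℝ := 1 + |α| with hC
  have hCpos : (0:ℝ) < C := by positivity
  set ε' : ℝ := min 1 (ε / (10 * C)) with hε'def
  have hε'pos : 0 < ε' := lt_min one_pos (by positivity)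
  have hε'le1 : ε' ≤ 1 := min_le_left _ _
  have hε'le : ε' ≤ ε / (10 * C) := min_le_right _ _
  -- density threshold
  obtain ⟨N₀, hN₀⟩ := Metric.tendsto_atTop.1 hA ε' hε'pos
  set N : ℕ := N₀ + 1 with hN
  have hdens : ∀ m : ℕ, |Ac m - α * m| ≤ ε' * m + C * N := by
    intro m
    rcases le_or_gt N m with h | h
    · have hm1 : (1:ℝ) ≤ m := by
        have : 1 ≤ m := le_trans (by rw [hN]; omega) h
        exact_mod_cast this
      have hm0 : (0:ℝ) < m := by linarith
      have h2 := hN₀ m (le_trans (by rw [hN]; omega) h)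
      rw [Real.dist_eq] at h2
      have h2' : |Ac m / (m:ℝ) - α| < ε' := h2
      have hm0' : ((m:ℕ):ℝ) ≠ 0 := ne_of_gt hm0
      have h3 : Ac m - α * m = (Ac m / m - α) * m := by
        rw [sub_mul, div_mul_cancel₀ _ hm0']
      rw [h3, abs_mul, abs_of_pos hm0]
      have h4 := mul_le_mul_of_nonneg_right h2'.le hm0.le
      have h5 : (0:ℝ) < C * N :=
        mul_pos hCpos (show (0:ℝ) < N by exact_mod_cast (show 0 < N by rw [hN]; omega))
      exact le_trans h4 (by linarith only [h5])
    · have h1 : |Ac m - α * m| ≤ Ac m + |α| * m := by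
        have := abs_sub (Ac m) (α * m)
        calc |Ac m - α * m| ≤ |Ac m| + |α * m| := abs_sub _ _
          _ = Ac m + |α| * m := by
              rw [abs_of_nonneg (hAc_nonneg m), abs_mul, abs_of_nonneg (by positivity : (0:ℝ) ≤ (m:ℝ))]
      have h2 : Ac m + |α| * m ≤ C * m := by
        have h5 := hAc_le m
        rw [hC]; linarith only [h5]
      have h3 : C * (m:ℝ) ≤ C * N := by
        apply mul_le_mul_of_nonneg_left _ hCpos.le
        exact_mod_cast h.le
      have h4 : (0:ℝ) ≤ ε' * m := by positivity
      linarith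
  -- the eventual bound from hstar
  have hNpos : (0:ℝ) < (N:ℝ) + 1 := by positivity
  filter_upwards [hstar.eventually_lt_const (show (0:ℝ) < ε' / ((N:ℝ)+1) by positivity)]
    with k hk
  -- per-k notation
  set n₀ : ℕ := nk k with hn₀def
  have hn₀1 : 1 ≤ n₀ := hnk k
  have hn₀R : (1:ℝ) ≤ (n₀:ℝ) := by exact_mod_cast hn₀1
  set c : ℝ := P k n₀ with hcdef
  have hcnn : (0:ℝ) ≤ c := hnonneg k n₀
  have hcn : (n₀:ℝ) * c < ε' / ((N:ℝ)+1) := hk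
  have hdivle : ε' / ((N:ℝ)+1) ≤ ε' := by
    rw [div_le_iff₀ hNpos]
    have h0 := mul_nonneg hε'pos.le (Nat.cast_nonneg (α := ℝ) N)
    linarith only [h0]
  have hcn' : (n₀:ℝ) * c ≤ ε' := le_trans hcn.le hdivle
  have hc_le_cn : c ≤ (n₀:ℝ) * c := le_mul_of_one_le_left hcnn hn₀R
  have hNc : (N:ℝ) * c ≤ ε' := by
    have h1 : c ≤ ε' / ((N:ℝ)+1) := le_trans hc_le_cn hcn.le
    have h2 : (N:ℝ) * c ≤ (N:ℝ) * (ε' / ((N:ℝ)+1)) :=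
      mul_le_mul_of_nonneg_left h1 (by positivity)
    have h3 : (N:ℝ) * (ε' / ((N:ℝ)+1)) ≤ ε' := by
      rw [mul_div_assoc', div_le_iff₀ hNpos]
      linarith only [hε'pos]
    linarith only [h2, h3]
  set q : ℕ → ℝ := fun j => P k (j + n₀) with hqdef
  have hq_nonneg : ∀ j, 0 ≤ q j := fun j => hnonneg k _
  have hq_summable : Summable q := (summable_nat_add_iff n₀).2 (hPsum k)
  have hq_anti : ∀ a b : ℕ, a ≤ b → q b ≤ q a := by
    intro a b hab
    exact hmono₂ k (a + n₀) (b + n₀) (Nat.le_add_left _ _) (by omega)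
  have hq0 : q 0 = c := by simp [hqdef, hcdef]
  have hq_le_c : ∀ j, q j ≤ c := by
    intro j
    rw [← hq0]
    exact hq_anti 0 j (Nat.zero_le _)
  set f : ℕ → ℝ := fun j => ind (j + n₀) with hfdef
  have hf0 : ∀ j, 0 ≤ f j := fun j => hind0 _
  have hf1 : ∀ j, f j ≤ 1 := fun j => hind1 _
  set g : ℕ → ℝ := fun n => ind n * P k n with hgdef
  have hg_nonneg : ∀ n, 0 ≤ g n := fun n => mul_nonneg (hind0 n) (hnonneg k n)
  have hg_le : ∀ n, g n ≤ P k n := fun n => by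
    have := mul_le_of_le_one_left (hnonneg k n) (hind1 n); exact this
  have hg_summable : Summable g := Summable.of_nonneg_of_le hg_nonneg hg_le (hPsum k)
  have hfq_summable : Summable (fun j => f j * q j) := (summable_nat_add_iff n₀).2 hg_summable
  have hfq_nonneg : ∀ j, 0 ≤ f j * q j := fun j => mul_nonneg (hf0 j) (hq_nonneg j)
  have hfq_le : ∀ j, f j * q j ≤ q j := fun j => mul_le_of_le_one_left (hq_nonneg j) (hf1 j)
  -- decomposition of the total sum
  set head : ℝ := ∑ i ∈ Finset.range n₀, g i with hheaddef
  set head₁ : ℝ := ∑ i ∈ Finset.range n₀, P k i with hhead₁def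
  have hS : (∑' n, Set.indicator A (P k) n) = head + ∑' j, f j * q j := by
    have h1 : (∑' n, Set.indicator A (P k) n) = ∑' n, g n := tsum_congr (hg_eq k)
    have h2 := Summable.sum_add_tsum_nat_add (f := g) n₀ hg_summable
    rw [h1, ← h2]
  have hhead_nonneg : 0 ≤ head := Finset.sum_nonneg fun i _ => hg_nonneg i
  have hhead₁_nonneg : 0 ≤ head₁ := Finset.sum_nonneg fun i _ => hnonneg k i
  have hhead_le_head₁ : head ≤ head₁ := Finset.sum_le_sum fun i _ => hg_le i
  have hhead₁_le : head₁ ≤ (n₀:ℝ) * c := by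
    calc head₁ ≤ (Finset.range n₀).card • c :=
          Finset.sum_le_card_nsmul _ _ _ (fun i _ => hmax k i)
      _ = (n₀:ℝ) * c := by rw [nsmul_eq_mul, Finset.card_range]
  have hQtot : (∑' j, q j) = 1 - head₁ := by
    have h2 := Summable.sum_add_tsum_nat_add (f := P k) n₀ (hPsum k)
    rw [htsum k] at h2
    have h3 : (∑' i, P k (i + n₀)) = ∑' j, q j := rfl
    linarith [h2, h3 ▸ h2]
  -- choice of W and T
  obtain ⟨I, hI⟩ := eventually_atTop.1
    ((tendsto_sum_nat_add q).eventually_lt_const hε'pos)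
  set W : ℕ := max I 1 with hWdef
  have hW1 : 1 ≤ W := le_max_right _ _
  set T : ℕ := 2 * W with hTdef
  have htailW : (∑' j, q (j + W)) ≤ ε' := (hI W (le_max_left _ _)).le
  have htailT : (∑' j, q (j + T)) ≤ ε' :=
    (hI T (le_trans (le_max_left I 1) (show W ≤ T by rw [hTdef]; omega))).le
  have htailW_nonneg : 0 ≤ ∑' j, q (j + W) := tsum_nonneg fun j => hq_nonneg _
  have htailT_nonneg : 0 ≤ ∑' j, q (j + T) := tsum_nonneg fun j => hq_nonneg _
  -- T * q T ≤ 2 * tail W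
  have hqT_nonneg : 0 ≤ q T := hq_nonneg T
  have hqTT : (T:ℝ) * q T ≤ 2 * ∑' j, q (j + W) := by
    have h2 : (Finset.range W).card • q T ≤ ∑ j ∈ Finset.range W, q (j + W) := by
      apply Finset.card_nsmul_le_sum
      intro j hj
      rw [Finset.mem_range] at hj
      exact hq_anti (j + W) T (by omega)
    have h3 : ∑ j ∈ Finset.range W, q (j + W) ≤ ∑' j, q (j + W) :=
      Summable.sum_le_tsum _ (fun i _ => hq_nonneg _) ((summable_nat_add_iff W).2 hq_summable)
    rw [nsmul_eq_mul, Finset.card_range] at h2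
    have : (T:ℝ) = 2 * (W:ℝ) := by push_cast [hTdef]; ring
    rw [this]
    linarith only [h2, h3]
  -- partial sums and tails of the main series
  set L : ℝ := ∑ j ∈ Finset.range T, f j * q j with hLdef
  have hL_le : L ≤ ∑' j, f j * q j :=
    Summable.sum_le_tsum _ (fun i _ => hfq_nonneg i) hfq_summable
  have hS2_le : (∑' j, f j * q j) ≤ L + ∑' j, q (j + T) := by
    have h2 := Summable.sum_add_tsum_nat_add (f := fun j => f j * q j) T hfq_summable
    have h3 : (∑' j, f (j + T) * q (j + T)) ≤ ∑' j, q (j + T) :=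
      Summable.tsum_le_tsum (fun j => hfq_le _) ((summable_nat_add_iff T).2 hfq_summable)
        ((summable_nat_add_iff T).2 hq_summable)
    linarith [h2]
  set Q : ℝ := ∑ j ∈ Finset.range T, q j with hQdef
  have hQsplit : Q + ∑' j, q (j + T) = 1 - head₁ := by
    have h2 := Summable.sum_add_tsum_nat_add (f := q) T hq_summable
    rw [hQtot] at h2
    exact h2
  have hQ_le_one : Q ≤ 1 := by linarith only [hQsplit, htailT_nonneg, hhead₁_nonneg]
  -- Abel summation
  have habel := abel_aux16 q f T
  have habel1 : Q = (∑ t ∈ Finset.range T, (q t - q (t+1)) * ((t:ℝ)+1)) + q T * T := by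
    have h := abel_aux16 q (fun _ => (1:ℝ)) T
    simp only [one_mul, Finset.sum_const, Finset.card_range, nsmul_eq_mul, mul_one] at h
    rw [hQdef]
    rw [h]
    push_cast
    ring
  have hDsum : ∑ t ∈ Finset.range T, (q t - q (t+1)) = c - q T := by
    rw [Finset.sum_range_sub' q T, hq0]
  -- B(t+1) in terms of Ac
  have hB : ∀ t : ℕ, (∑ j ∈ Finset.range (t+1), f j) = Ac (n₀ + t) - Ac (n₀ - 1) := by
    intro t
    have e0 : Ac (n₀ + t) = ∑ j ∈ Finset.Ico 1 (n₀ + t + 1), ind j := by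
      rw [hAcdef]; rw [Finset.Ico_add_one_right_eq_Icc]
    have e1 : Ac (n₀ - 1) = ∑ j ∈ Finset.Ico 1 n₀, ind j := by
      have h : Finset.Icc 1 (n₀ - 1) = Finset.Ico 1 n₀ := by
        ext x
        simp only [Finset.mem_Icc, Finset.mem_Ico]
        omega
      rw [hAcdef]
      simp only
      rw [h]
    have e2 := Finset.sum_Ico_consecutive ind (show 1 ≤ n₀ by omega)
      (show n₀ ≤ n₀ + t + 1 by omega)
    have e3 : ∑ j ∈ Finset.Ico n₀ (n₀ + t + 1), ind j = ∑ j ∈ Finset.range (t+1), f j := by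
      rw [Finset.sum_Ico_eq_sum_range]
      have h4 : n₀ + t + 1 - n₀ = t + 1 := by omega
      rw [h4]
      exact Finset.sum_congr rfl fun j _ => by rw [hfdef]; simp [add_comm]
    rw [e0, e1]
    linarith [e2, e3 ▸ e2]
  -- per-term bound on B
  set K : ℝ := 2 * ε' * (n₀:ℝ) + 2 * C * (N:ℝ) with hKdef
  have hK_nonneg : 0 ≤ K := by positivity
  have hBbound : ∀ t ∈ Finset.range T,
      |(∑ j ∈ Finset.range (t+1), f j) - α * ((t:ℝ)+1)| ≤ ε' * ((t:ℝ)+1) + K := by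
    intro t _
    rw [hB t]
    have h1 := hdens (n₀ + t)
    have h2 := hdens (n₀ - 1)
    have hc1 : ((n₀ + t : ℕ) : ℝ) = (n₀:ℝ) + t := by push_cast; ring
    have hc2 : ((n₀ - 1 : ℕ) : ℝ) = (n₀:ℝ) - 1 := by
      rw [Nat.cast_sub hn₀1]; norm_num
    rw [hc1] at h1
    rw [hc2] at h2
    have e : Ac (n₀ + t) - Ac (n₀ - 1) - α * ((t:ℝ)+1)
        = (Ac (n₀ + t) - α * ((n₀:ℝ) + t)) - (Ac (n₀ - 1) - α * ((n₀:ℝ) - 1)) := by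
      ring
    rw [e]
    calc |(Ac (n₀ + t) - α * ((n₀:ℝ) + t)) - (Ac (n₀ - 1) - α * ((n₀:ℝ) - 1))|
        ≤ |Ac (n₀ + t) - α * ((n₀:ℝ) + t)| + |Ac (n₀ - 1) - α * ((n₀:ℝ) - 1)| :=
          abs_sub _ _
      _ ≤ (ε' * ((n₀:ℝ) + t) + C * N) + (ε' * ((n₀:ℝ) - 1) + C * N) :=
          add_le_add h1 h2
      _ ≤ ε' * ((t:ℝ)+1) + K := by rw [hKdef]; linarith only [hε'pos]
  -- the error term δ
  set δ : ℝ := ∑ t ∈ Finset.range T,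
      (q t - q (t+1)) * ((∑ j ∈ Finset.range (t+1), f j) - α * ((t:ℝ)+1)) with hδdef
  have hδbound : |δ| ≤ ε' * (Q - q T * T) + K * (c - q T) := by
    have h1 : |δ| ≤ ∑ t ∈ Finset.range T,
        |(q t - q (t+1)) * ((∑ j ∈ Finset.range (t+1), f j) - α * ((t:ℝ)+1))| :=
      Finset.abs_sum_le_sum_abs _ _
    have h2 : ∀ t ∈ Finset.range T,
        |(q t - q (t+1)) * ((∑ j ∈ Finset.range (t+1), f j) - α * ((t:ℝ)+1))|
          ≤ (q t - q (t+1)) * (ε' * ((t:ℝ)+1) + K) := by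
      intro t ht
      rw [abs_mul, abs_of_nonneg (sub_nonneg.2 (hq_anti t (t+1) (Nat.le_succ t)))]
      exact mul_le_mul_of_nonneg_left (hBbound t ht)
        (sub_nonneg.2 (hq_anti t (t+1) (Nat.le_succ t)))
    have h3 : ∑ t ∈ Finset.range T, (q t - q (t+1)) * (ε' * ((t:ℝ)+1) + K)
        = ε' * (∑ t ∈ Finset.range T, (q t - q (t+1)) * ((t:ℝ)+1))
          + K * ∑ t ∈ Finset.range T, (q t - q (t+1)) := by
      rw [Finset.mul_sum, Finset.mul_sum, ← Finset.sum_add_distrib]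
      exact Finset.sum_congr rfl fun t _ => by ring
    have h4 : ε' * (∑ t ∈ Finset.range T, (q t - q (t+1)) * ((t:ℝ)+1))
        = ε' * (Q - q T * T) := by
      congr 1
      linarith [habel1]
    calc |δ| ≤ ∑ t ∈ Finset.range T,
          |(q t - q (t+1)) * ((∑ j ∈ Finset.range (t+1), f j) - α * ((t:ℝ)+1))| := h1
      _ ≤ ∑ t ∈ Finset.range T, (q t - q (t+1)) * (ε' * ((t:ℝ)+1) + K) :=
          Finset.sum_le_sum h2
      _ = ε' * (Q - q T * T) + K * (c - q T) := by rw [h3, h4, hDsum]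
  -- split δ: the Abel identity in final form
  have hδsplit : δ = (∑ t ∈ Finset.range T,
      (q t - q (t+1)) * (∑ j ∈ Finset.range (t+1), f j))
        - α * (∑ t ∈ Finset.range T, (q t - q (t+1)) * ((t:ℝ)+1)) := by
    rw [hδdef, Finset.mul_sum, ← Finset.sum_sub_distrib]
    exact Finset.sum_congr rfl fun t _ => by ring
  set BtT : ℝ := ∑ j ∈ Finset.range T, f j with hBtTdef
  have hBtT_nonneg : 0 ≤ BtT := Finset.sum_nonneg fun j _ => hf0 j
  have hBtT_le : BtT ≤ (T:ℝ) := by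
    calc BtT ≤ (Finset.range T).card • (1:ℝ) :=
        Finset.sum_le_card_nsmul _ _ _ (fun j _ => hf1 j)
      _ = (T:ℝ) := by rw [nsmul_eq_mul, Finset.card_range, mul_one]
  have hLid : L = δ + α * (Q - q T * T) + q T * BtT := by
    have e2 : (∑ t ∈ Finset.range T, (q t - q (t+1)) * ((t:ℝ)+1)) = Q - q T * T := by
      linarith [habel1]
    have e3 : (∑ t ∈ Finset.range T,
        (q t - q (t+1)) * (∑ j ∈ Finset.range (t+1), f j)) = δ + α * (Q - q T * T) := by
      rw [hδsplit, e2]; ring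
    rw [hLdef, habel, e3]
  -- final assembly
  rw [Real.dist_eq]
  set S2 : ℝ := ∑' j, f j * q j with hS2def
  set tT : ℝ := ∑' j, q (j + T) with htTdef
  set tW : ℝ := ∑' j, q (j + W) with htWdef
  have hr2 : 0 ≤ S2 - L ∧ S2 - L ≤ tT :=
    ⟨by linarith only [hL_le], by linarith only [hS2_le]⟩
  have hQeq : Q = 1 - head₁ - tT := by linarith only [hQsplit]
  have hfinal : (∑' n, Set.indicator A (P k) n) - α
      = head + δ + q T * BtT - α * (q T * T) - α * (head₁ + tT) + (S2 - L) := by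
    rw [hS]
    have : L = δ + α * (Q - q T * T) + q T * BtT := hLid
    rw [hQeq] at this
    linear_combination this
  -- numeric bounds
  have b1 : head ≤ ε' := le_trans (le_trans hhead_le_head₁ hhead₁_le) hcn'
  have bqTT : 0 ≤ q T * (T:ℝ) ∧ q T * (T:ℝ) ≤ 2 * ε' := by
    constructor
    · positivity
    · linarith only [hqTT, htailW]
  have b2 : 0 ≤ q T * BtT ∧ q T * BtT ≤ 2 * ε' := by
    constructor
    · positivity
    · calc q T * BtT ≤ q T * (T:ℝ) := mul_le_mul_of_nonneg_left hBtT_le hqT_nonneg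
        _ ≤ 2 * ε' := bqTT.2
  have b3 : |α * (q T * (T:ℝ))| ≤ 2 * (|α| * ε') := by
    rw [abs_mul, abs_of_nonneg bqTT.1]
    have h0 := mul_le_mul_of_nonneg_left bqTT.2 (abs_nonneg α)
    linarith only [h0]
  have b4 : |α * (head₁ + tT)| ≤ 2 * (|α| * ε') := by
    rw [abs_mul]
    have h1 : 0 ≤ head₁ + tT := by linarith only [hhead₁_nonneg, htailT_nonneg]
    have h2 : head₁ + tT ≤ 2 * ε' := by
      have h5 := le_trans hhead₁_le hcn'
      linarith only [h5, htailT]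
    rw [abs_of_nonneg h1]
    have h0 := mul_le_mul_of_nonneg_left h2 (abs_nonneg α)
    linarith only [h0]
  have b5 : |δ| ≤ 3 * ε' + 2 * (C * ε') := by
    have h1 : ε' * (Q - q T * T) ≤ ε' := by
      have hx : Q - q T * T ≤ 1 := by linarith only [hQ_le_one, bqTT.1]
      have h0 := mul_le_mul_of_nonneg_left hx hε'pos.le
      linarith only [h0]
    have h2 : K * (c - q T) ≤ K * c :=
      mul_le_mul_of_nonneg_left (by linarith [hqT_nonneg]) hK_nonneg
    have h3 : K * c ≤ 2 * ε' + 2 * (C * ε') := by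
      rw [hKdef]
      have e1 : (2 * ε' * (n₀:ℝ) + 2 * C * (N:ℝ)) * c
          = 2 * ε' * ((n₀:ℝ) * c) + 2 * C * ((N:ℝ) * c) := by ring
      rw [e1]
      have e2 : 2 * ε' * ((n₀:ℝ) * c) ≤ 2 * ε' := by
        have hx : (n₀:ℝ) * c ≤ 1 := le_trans hcn' hε'le1
        have h0 := mul_le_mul_of_nonneg_left hx (by positivity : (0:ℝ) ≤ 2 * ε')
        linarith only [h0]
      have e3 : 2 * C * ((N:ℝ) * c) ≤ 2 * (C * ε') := by
        have h0 := mul_le_mul_of_nonneg_left hNc (by positivity : (0:ℝ) ≤ 2 * C)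
        linarith only [h0]
      linarith only [e2, e3]
    linarith only [hδbound, h1, h2, h3]
  have b6 : S2 - L ≤ ε' := by linarith only [hr2.2, htailT]
  -- finish
  have hmain : |(∑' n, Set.indicator A (P k) n) - α| ≤ (9 + 6 * |α|) * ε' := by
    rw [hfinal]
    have hb3 := abs_le.1 b3
    have hb4 := abs_le.1 b4
    have hb5 := abs_le.1 b5
    have hCe : C * ε' = ε' + |α| * ε' := by rw [hC]; ring
    rw [abs_le]
    constructor
    · linarith only [hhead_nonneg, b2.1, hr2.1, hb3.1, hb3.2, hb4.1, hb4.2, hb5.1, hCe, hε'pos]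
    · linarith only [b1, b2.2, b6, hb3.1, hb3.2, hb4.1, hb4.2, hb5.2, hCe, hε'pos]
  have hlast : (9 + 6 * |α|) * ε' < ε := by
    have h1 : ε' * (10 * C) ≤ ε := (le_div_iff₀ (by positivity)).1 hε'le
    have h2 : ε' * (10 * C) = 10 * ε' + 10 * (|α| * ε') := by rw [hC]; ring
    have h3 : 0 ≤ |α| * ε' := mul_nonneg (abs_nonneg α) hε'pos.le
    linarith only [h1, h2, h3, hε'pos]
  linarith only [hmain, hlast]
end

section
/- Let E be a URI-set, and for n ≥ 1 order the elements of E ∩ {1,...,n} backwards as Y_1^{(n)} > Y_2^{(n)} > ... > Y_{|E_n|}^{(n)} = 1. Then Y_1^{(n)} is uniformly distributed in {1,...,n}, and conditionally on (Y_1^{(n)},...,Y_{i−1}^{(n)}) with Y_{i−1}^{(n)} > 1, the random variable Y_i^{(n)} is uniformly distributed in {1,...,Y_{i−1}^{(n)} − 1}. -/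
open MeasureTheory ProbabilityTheory
open scoped ENNReal

/-- The elements of `Es ∩ {1,…,n}` ordered backwards:
`backY Es n 1 > backY Es n 2 > …` (with `backY Es n 0 = n+1` as a sentinel), i.e.
`backY Es n i` is the `i`-th largest element of `Es ∩ {1,…,n}`. -/
noncomputable def backY (Es : Set ℕ) (n : ℕ) : ℕ → ℕ
  | 0 => n + 1
  | i + 1 => sSup {m | m < backY Es n i ∧ m ∈ Es}

lemma sSup_pattern (Es : Set ℕ) {a b : ℕ} (ha : 1 ≤ a) (hab : a < b) :
    sSup {m | m < b ∧ m ∈ Es} = a ↔ a ∈ Es ∧ ∀ m, a < m → m < b → m ∉ Es := by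
  have hbdd : BddAbove {m | m < b ∧ m ∈ Es} := ⟨b, fun m hm => hm.1.le⟩
  constructor
  · intro h
    have hne : {m | m < b ∧ m ∈ Es}.Nonempty := by
      by_contra hne
      rw [Set.not_nonempty_iff_eq_empty] at hne
      rw [hne, csSup_empty] at h
      simp only [Nat.bot_eq_zero] at h
      omega
    have hmem := Nat.sSup_mem hne hbdd
    rw [h] at hmem
    refine ⟨hmem.2, fun m h1 h2 hm => ?_⟩
    have := le_csSup hbdd (show m ∈ {m | m < b ∧ m ∈ Es} from ⟨h2, hm⟩)
    omega
  · rintro ⟨h1, h2⟩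
    refine le_antisymm (csSup_le ⟨a, hab, h1⟩ fun m hm => ?_) (le_csSup hbdd ⟨hab, h1⟩)
    by_contra hma
    exact h2 m (by omega) hm.1 hm.2

lemma anti_of_dec {y : ℕ → ℕ} {k : ℕ} (hdec : ∀ l, 1 ≤ l → l < k → y (l + 1) < y l) :
    ∀ l₁ l₂, 1 ≤ l₁ → l₁ ≤ l₂ → l₂ ≤ k → y l₂ ≤ y l₁ := by
  intro l₁ l₂ h1
  induction l₂ with
  | zero => intro h12 _; omega
  | succ m ih =>
    intro h12 h2
    rcases Nat.eq_or_lt_of_le h12 with h | h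
    · rw [← h]
    · have h3 := hdec m (by omega) (by omega)
      have h4 := ih (by omega) (by omega)
      omega

lemma backY_pattern (Es : Set ℕ) (n : ℕ) (y : ℕ → ℕ) :
    ∀ k, 1 ≤ k → y 1 ≤ n → (∀ l, 1 ≤ l → l < k → y (l + 1) < y l) → 1 ≤ y k →
      ((∀ l, 1 ≤ l → l ≤ k → backY Es n l = y l) ↔
        ∀ m, y k ≤ m → m ≤ n → (m ∈ Es ↔ ∃ l, 1 ≤ l ∧ l ≤ k ∧ y l = m)) := by
  intro k
  induction k with
  | zero => omega
  | succ k ih =>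
    intro _ hy1 hdec hpos
    have hanti := anti_of_dec hdec
    rcases Nat.eq_zero_or_pos k with rfl | hk
    · -- base case: k + 1 = 1
      have h1 : backY Es n 1 = sSup {m | m < n + 1 ∧ m ∈ Es} := by simp [backY]
      simp only [Nat.zero_add] at *
      constructor
      · intro h m hm1 hm2
        have hh := h 1 le_rfl le_rfl
        rw [h1] at hh
        obtain ⟨he, hgap⟩ := (sSup_pattern Es hpos (by omega)).1 hh
        constructor
        · intro hmE
          refine ⟨1, le_rfl, le_rfl, ?_⟩
          by_contra hne
          exact hgap m (by omega) (by omega) hmE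
        · rintro ⟨l, hl1, hl2, rfl⟩
          rw [show l = 1 by omega]
          exact he
      · intro h l hl1 hl2
        rw [show l = 1 by omega, h1]
        refine (sSup_pattern Es hpos (by omega)).2 ⟨?_, ?_⟩
        · exact (h (y 1) le_rfl hy1).2 ⟨1, le_rfl, le_rfl, rfl⟩
        · intro m hm1 hm2 hmE
          rcases (h m (by omega) (by omega)).1 hmE with ⟨l, hl1', hl2', hlm⟩
          rw [show l = 1 by omega] at hlm
          omega
    · -- step case: k ≥ 1
      have hdec' : ∀ l, 1 ≤ l → l < k → y (l + 1) < y l := fun l h1 h2 => hdec l h1 (by omega)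
      have hkk : y (k + 1) < y k := hdec k hk (by omega)
      have hposk : 1 ≤ y k := by omega
      have IH := ih hk hy1 hdec' hposk
      have hykn : y (k + 1) ≤ n := le_trans (hanti 1 (k + 1) le_rfl (by omega) le_rfl) hy1
      have hykn' : y k ≤ n := le_trans (hanti 1 k le_rfl hk (by omega)) hy1
      have hEq : backY Es n (k + 1) = sSup {m | m < backY Es n k ∧ m ∈ Es} := by simp [backY]
      constructor
      · intro h
        have hLk : ∀ l, 1 ≤ l → l ≤ k → backY Es n l = y l := fun l h1 h2 => h l h1 (by omega)
        have hpat := IH.1 hLk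
        have hsup : sSup {m | m < y k ∧ m ∈ Es} = y (k + 1) := by
          have h2 := h (k + 1) (by omega) le_rfl
          rw [hEq] at h2
          rwa [hLk k hk le_rfl] at h2
        obtain ⟨he, hgap⟩ := (sSup_pattern Es hpos hkk).1 hsup
        intro m hm1 hm2
        rcases lt_or_ge m (y k) with hmb | hmb
        · constructor
          · intro hmE
            refine ⟨k + 1, by omega, le_rfl, ?_⟩
            by_contra hne
            exact hgap m (by omega) hmb hmE
          · rintro ⟨l, hl1, hl2, rfl⟩
            rcases Nat.lt_or_ge l (k + 1) with hl | hl
            · exfalso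
              have := hanti l k hl1 (by omega) (by omega)
              omega
            · rw [show l = k + 1 by omega]
              exact he
        · rw [hpat m hmb hm2]
          constructor
          · rintro ⟨l, hl1, hl2, hlm⟩
            exact ⟨l, hl1, by omega, hlm⟩
          · rintro ⟨l, hl1, hl2, hlm⟩
            rcases Nat.lt_or_ge l (k + 1) with hl | hl
            · exact ⟨l, hl1, by omega, hlm⟩
            · exfalso
              rw [show l = k + 1 by omega] at hlm
              omega
      · intro hpat'
        have hpat : ∀ m, y k ≤ m → m ≤ n → (m ∈ Es ↔ ∃ l, 1 ≤ l ∧ l ≤ k ∧ y l = m) := by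
          intro m hm1 hm2
          rw [hpat' m (by omega) hm2]
          constructor
          · rintro ⟨l, hl1, hl2, hlm⟩
            rcases Nat.lt_or_ge l (k + 1) with hl | hl
            · exact ⟨l, hl1, by omega, hlm⟩
            · exfalso
              rw [show l = k + 1 by omega] at hlm
              omega
          · rintro ⟨l, hl1, hl2, hlm⟩
            exact ⟨l, hl1, by omega, hlm⟩
        have hLk := IH.2 hpat
        intro l hl1 hl2
        rcases Nat.lt_or_ge l (k + 1) with hl | hl
        · exact hLk l hl1 (by omega)
        · rw [show l = k + 1 by omega, hEq, hLk k hk le_rfl]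
          refine (sSup_pattern Es hpos hkk).2 ⟨?_, ?_⟩
          · exact (hpat' (y (k + 1)) le_rfl hykn).2 ⟨k + 1, by omega, le_rfl, rfl⟩
          · intro m hm1 hm2 hmE
            rcases (hpat' m (by omega) (by omega)).1 hmE with ⟨l', h1', h2', hlm⟩
            rcases Nat.lt_or_ge l' (k + 1) with h | h
            · have := hanti l' k h1' (by omega) (by omega)
              omega
            · rw [show l' = k + 1 by omega] at hlm
              omega

lemma meas_biInter_pat {Ω : Type*} [MeasurableSpace Ω] {μ : Measure Ω} {E : ℕ → Set Ω}
    (hind : iIndepSet E μ) (S : Finset ℕ) (f : ℕ → Set Ω)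
    (hf : ∀ m ∈ S, f m = E m ∨ f m = (E m)ᶜ) :
    μ (⋂ m ∈ S, f m) = ∏ m ∈ S, μ (f m) := by
  refine (iIndepSet_iff E μ).1 hind S fun m hm => ?_
  rcases hf m hm with h | h
  · rw [h]; exact MeasurableSpace.measurableSet_generateFrom rfl
  · rw [h]
    exact MeasurableSet.compl (MeasurableSpace.measurableSet_generateFrom (show E m ∈ {E m} from rfl))

lemma tele (a : ℕ) (ha : 1 ≤ a) :
    ∀ c, a ≤ c → (1 / (a : ℝ≥0∞)) * ∏ m ∈ Finset.Ioc a c, (1 - 1 / (m : ℝ≥0∞))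
      = 1 / (c : ℝ≥0∞) := by
  intro c hc
  induction c, hc using Nat.le_induction with
  | base => simp
  | succ c hc ih =>
    have hc0 : (c : ℝ≥0∞) ≠ 0 := by
      simp only [ne_eq, Nat.cast_eq_zero]; omega
    have hc1 : ((c : ℝ≥0∞) + 1) ≠ 0 := by simp
    have hct : ((c : ℝ≥0∞) + 1) ≠ ⊤ := by
      simp [ENNReal.add_eq_top]
    rw [Finset.prod_Ioc_succ_top (by omega)]
    rw [← mul_assoc, ih]
    have h1 : (1 : ℝ≥0∞) - 1 / ((c : ℝ≥0∞) + 1) = (c : ℝ≥0∞) / ((c : ℝ≥0∞) + 1) := by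
      have hadd : (c : ℝ≥0∞) / ((c : ℝ≥0∞) + 1) + 1 / ((c : ℝ≥0∞) + 1) = 1 := by
        rw [ENNReal.div_add_div_same]
        exact ENNReal.div_self hc1 hct
      exact ENNReal.sub_eq_of_eq_add (by simp [ENNReal.div_eq_top]) hadd.symm
    have hcast : ((c + 1 : ℕ) : ℝ≥0∞) = (c : ℝ≥0∞) + 1 := by push_cast; ring
    rw [hcast, h1, ← mul_div_assoc, one_div, ENNReal.inv_mul_cancel hc0 (ENNReal.natCast_ne_top c),
      one_div]
  
lemma prod_run {Ω : Type*} [MeasurableSpace Ω] {μ : Measure Ω} [IsProbabilityMeasure μ]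
    {E : ℕ → Set Ω} (hmeas : ∀ n, MeasurableSet (E n))
    (hprob : ∀ m : ℕ, 1 ≤ m → μ (E m) = 1 / m)
    (j c : ℕ) (hj : 1 ≤ j) (hjc : j ≤ c) :
    ∏ m ∈ Finset.Icc j c, μ (if m = j then E m else (E m)ᶜ) = 1 / (c : ℝ≥0∞) := by
  rw [Finset.Icc_eq_cons_Ioc hjc, Finset.prod_cons, if_pos rfl, hprob j hj]
  rw [Finset.prod_congr rfl (fun m hm => ?_)]
  · exact tele j hj c hjc
  · rw [Finset.mem_Ioc] at hm
    rw [if_neg (by omega), prob_compl_eq_one_sub (hmeas m), hprob m (by omega)]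

/-- For a URI-set `E` and its elements in `{1,…,n}` ordered backwards
`Y_1 > Y_2 > …`: `Y_1` is uniform on `{1,…,n}`, and conditionally on
`(Y_1,…,Y_{i-1}) = (y_1,…,y_{i-1})` with `y_{i-1} > 1`, the variable `Y_i` is
uniform on `{1,…,y_{i-1}−1}`. -/
theorem stmt18 {Ω : Type*} [MeasurableSpace Ω] (μ : Measure Ω) [IsProbabilityMeasure μ]
    (E : ℕ → Set Ω) (hmeas : ∀ n, MeasurableSet (E n))
    (hind : iIndepSet E μ)
    (hprob : ∀ n : ℕ, 1 ≤ n → μ (E n) = 1 / n)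
    (hzero : E 0 = ∅)
    (n : ℕ) (hn : 1 ≤ n) :
    (∀ j : ℕ, 1 ≤ j → j ≤ n →
        μ {ω | backY {m | ω ∈ E m} n 1 = j} = 1 / n)
    ∧ ∀ i : ℕ, 2 ≤ i → ∀ y : ℕ → ℕ,
        y 1 ≤ n →
        (∀ l : ℕ, 1 ≤ l → l < i - 1 → y (l + 1) < y l) →
        1 < y (i - 1) →
        ∀ j : ℕ, 1 ≤ j → j ≤ y (i - 1) - 1 →
          (μ[|{ω | ∀ l : ℕ, 1 ≤ l → l ≤ i - 1 → backY {m | ω ∈ E m} n l = y l}])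
              {ω | backY {m | ω ∈ E m} n i = j}
            = 1 / ((y (i - 1) : ℝ≥0∞) - 1) := by
  constructor
  · intro j hj1 hjn
    have hset : {ω | backY {m | ω ∈ E m} n 1 = j}
        = ⋂ m ∈ Finset.Icc j n, (if m = j then E m else (E m)ᶜ) := by
      ext ω
      have h1 : backY {m | ω ∈ E m} n 1 = sSup {m | m < n + 1 ∧ m ∈ {m | ω ∈ E m}} := by
        simp [backY]
      simp only [Set.mem_setOf_eq, Set.mem_iInter]
      rw [h1, sSup_pattern {m | ω ∈ E m} hj1 (by omega)]
      constructor
      · rintro ⟨he, hgap⟩ m hm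
        rw [Finset.mem_Icc] at hm
        by_cases hmj : m = j
        · rw [if_pos hmj, hmj]; exact he
        · rw [if_neg hmj]
          exact hgap m (by omega) (by omega)
      · intro h
        refine ⟨?_, fun m hm1 hm2 hmE => ?_⟩
        · have := h j (by rw [Finset.mem_Icc]; omega)
          rwa [if_pos rfl] at this
        · have := h m (by rw [Finset.mem_Icc]; omega)
          rw [if_neg (by omega)] at this
          exact this hmE
    rw [hset, meas_biInter_pat hind _ _ (fun m _ => by split <;> [left; right] <;> rfl)]
    exact prod_run hmeas hprob j n hj1 hjn
  · intro i hi y hy1 hdec hygt j hj hjb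
    obtain ⟨k, rfl⟩ : ∃ k, i = k + 1 := ⟨i - 1, by omega⟩
    simp only [Nat.add_sub_cancel] at hdec hygt hjb ⊢
    have hk : 1 ≤ k := by omega
    set b := y k with hb
    have hanti := anti_of_dec hdec
    have hb2 : 2 ≤ b := hygt
    have hbn : b ≤ n := le_trans (hanti 1 k le_rfl hk le_rfl) hy1
    have hjb' : j < b := by omega
    have h0 : ∀ ω : Ω, (0 : ℕ) ∉ {m | ω ∈ E m} := by
      intro ω h
      simp only [Set.mem_setOf_eq, hzero] at h
      exact h
    set T : Finset ℕ := (Finset.Icc 1 k).image y with hT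
    have hTmem : ∀ m : ℕ, m ∈ T ↔ ∃ l, 1 ≤ l ∧ l ≤ k ∧ y l = m := by
      intro m
      simp only [hT, Finset.mem_image, Finset.mem_Icc]
      constructor
      · rintro ⟨l, ⟨h1, h2⟩, h3⟩; exact ⟨l, h1, h2, h3⟩
      · rintro ⟨l, h1, h2, h3⟩; exact ⟨l, ⟨h1, h2⟩, h3⟩
    have hTge : ∀ m ∈ T, b ≤ m := by
      intro m hm
      rcases (hTmem m).1 hm with ⟨l, h1, h2, rfl⟩
      exact hanti l k h1 h2 le_rfl
    set A : Set Ω := {ω | ∀ l : ℕ, 1 ≤ l → l ≤ k → backY {m | ω ∈ E m} n l = y l} with hAdef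
    have hpatA : ∀ ω : Ω, ω ∈ A ↔
        ∀ m, b ≤ m → m ≤ n → (m ∈ {m | ω ∈ E m} ↔ ∃ l, 1 ≤ l ∧ l ≤ k ∧ y l = m) := by
      intro ω
      exact backY_pattern {m | ω ∈ E m} n y k hk hy1 hdec (by omega)
    have hA : A = ⋂ m ∈ Finset.Icc b n, (if m ∈ T then E m else (E m)ᶜ) := by
      ext ω
      rw [hpatA ω]
      simp only [Set.mem_iInter, Set.mem_setOf_eq]
      constructor
      · intro h m hm
        rw [Finset.mem_Icc] at hm
        by_cases hmT : m ∈ T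
        · rw [if_pos hmT]
          exact (h m hm.1 hm.2).2 ((hTmem m).1 hmT)
        · rw [if_neg hmT]
          intro hE
          exact hmT ((hTmem m).2 ((h m hm.1 hm.2).1 hE))
      · intro h m hm1 hm2
        have := h m (by rw [Finset.mem_Icc]; exact ⟨hm1, hm2⟩)
        by_cases hmT : m ∈ T
        · rw [if_pos hmT] at this
          exact ⟨fun _ => (hTmem m).1 hmT, fun _ => this⟩
        · rw [if_neg hmT] at this
          exact ⟨fun hE => absurd hE this, fun hex => absurd ((hTmem m).2 hex) hmT⟩
    set f : ℕ → Set Ω := fun m =>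
      if m < b then (if m = j then E m else (E m)ᶜ) else (if m ∈ T then E m else (E m)ᶜ)
      with hf
    have hfpat : ∀ m ∈ Finset.Icc j n, f m = E m ∨ f m = (E m)ᶜ := by
      intro m _
      simp only [hf]
      split <;> split <;> simp
    have hAB : A ∩ {ω | backY {m | ω ∈ E m} n (k + 1) = j} = ⋂ m ∈ Finset.Icc j n, f m := by
      ext ω
      simp only [Set.mem_inter_iff, Set.mem_setOf_eq, Set.mem_iInter]
      have hEq : backY {m | ω ∈ E m} n (k + 1)
          = sSup {m | m < backY {m | ω ∈ E m} n k ∧ m ∈ {m | ω ∈ E m}} := by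
        simp [backY]
      constructor
      · rintro ⟨hAω, hBω⟩
        have hbk : backY {m | ω ∈ E m} n k = b := hAω k hk le_rfl
        rw [hEq] at hBω
        rw [hbk] at hBω
        obtain ⟨he, hgap⟩ := (sSup_pattern _ hj hjb').1 hBω
        have hpat := (hpatA ω).1 hAω
        intro m hm
        rw [Finset.mem_Icc] at hm
        simp only [hf]
        by_cases hmb : m < b
        · rw [if_pos hmb]
          by_cases hmj : m = j
          · rw [if_pos hmj, hmj]; exact he
          · rw [if_neg hmj]
            exact hgap m (by omega) hmb
        · rw [if_neg hmb]
          by_cases hmT : m ∈ T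
          · rw [if_pos hmT]
            exact (hpat m (by omega) hm.2).2 ((hTmem m).1 hmT)
          · rw [if_neg hmT]
            intro hE
            exact hmT ((hTmem m).2 ((hpat m (by omega) hm.2).1 hE))
      · intro h
        have hAω : ω ∈ A := by
          rw [hpatA ω]
          intro m hm1 hm2
          have := h m (by rw [Finset.mem_Icc]; omega)
          simp only [hf, if_neg (by omega : ¬ m < b)] at this
          by_cases hmT : m ∈ T
          · rw [if_pos hmT] at this
            exact ⟨fun _ => (hTmem m).1 hmT, fun _ => this⟩
          · rw [if_neg hmT] at this
            exact ⟨fun hE => absurd hE this, fun hex => absurd ((hTmem m).2 hex) hmT⟩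
        refine ⟨hAω, ?_⟩
        have hbk : backY {m | ω ∈ E m} n k = b := hAω k hk le_rfl
        rw [hEq, hbk]
        refine (sSup_pattern _ hj hjb').2 ⟨?_, ?_⟩
        · have := h j (by rw [Finset.mem_Icc]; omega)
          simp only [hf, if_pos hjb', if_pos rfl] at this
          exact this
        · intro m hm1 hm2 hmE
          have := h m (by rw [Finset.mem_Icc]; omega)
          simp only [hf, if_pos hm2, if_neg (by omega : ¬ m = j)] at this
          exact this hmE
    have hTpat : ∀ (m : ℕ), (if m ∈ T then E m else (E m)ᶜ) = E m
        ∨ (if m ∈ T then E m else (E m)ᶜ) = (E m)ᶜ := by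
      intro m; split <;> simp
    have hAmeas : MeasurableSet A := by
      rw [hA]
      refine Finset.measurableSet_biInter _ fun m _ => ?_
      split
      · exact hmeas m
      · exact (hmeas m).compl
    have hμA : μ A = ∏ m ∈ Finset.Icc b n, μ (if m ∈ T then E m else (E m)ᶜ) := by
      rw [hA]
      exact meas_biInter_pat hind _ _ fun m _ => hTpat m
    have hA0 : μ A ≠ 0 := by
      rw [hμA]
      rw [Finset.prod_ne_zero_iff]
      intro m hm
      rw [Finset.mem_Icc] at hm
      split
      · rw [hprob m (by omega)]
        simp
      · rw [prob_compl_eq_one_sub (hmeas m), hprob m (by omega)]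
        intro hcon
        rw [tsub_eq_zero_iff_le, one_div, ENNReal.le_inv_iff_mul_le, one_mul] at hcon
        have : (2 : ℝ≥0∞) ≤ (m : ℝ≥0∞) := by
          exact_mod_cast Nat.cast_le.2 (by omega : 2 ≤ m)
        have h1 : (1 : ℝ≥0∞) < 2 := by norm_num
        exact absurd (le_trans this hcon) (by norm_num)
    have hsplit : Finset.Icc j n = Finset.Icc j (b - 1) ∪ Finset.Icc b n := by
      ext m
      simp only [Finset.mem_Icc, Finset.mem_union]
      omega
    have hdisj : Disjoint (Finset.Icc j (b - 1)) (Finset.Icc b n) := by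
      rw [Finset.disjoint_left]
      intro m hm1 hm2
      rw [Finset.mem_Icc] at hm1 hm2
      omega
    have hABμ : μ (A ∩ {ω | backY {m | ω ∈ E m} n (k + 1) = j})
        = (1 / ((b - 1 : ℕ) : ℝ≥0∞)) * μ A := by
      rw [hAB, meas_biInter_pat hind _ _ hfpat, hsplit, Finset.prod_union hdisj]
      have e1 : ∏ m ∈ Finset.Icc j (b - 1), μ (f m)
          = ∏ m ∈ Finset.Icc j (b - 1), μ (if m = j then E m else (E m)ᶜ) := by
        refine Finset.prod_congr rfl fun m hm => ?_
        rw [Finset.mem_Icc] at hm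
        simp only [hf, if_pos (by omega : m < b)]
      have e2 : ∏ m ∈ Finset.Icc b n, μ (f m)
          = ∏ m ∈ Finset.Icc b n, μ (if m ∈ T then E m else (E m)ᶜ) := by
        refine Finset.prod_congr rfl fun m hm => ?_
        rw [Finset.mem_Icc] at hm
        simp only [hf, if_neg (by omega : ¬ m < b)]
      rw [e1, e2, prod_run hmeas hprob j (b - 1) hj (by omega), ← hμA]
    rw [cond_apply hAmeas, hABμ, ← mul_assoc, mul_comm (μ A)⁻¹, mul_assoc,
      ENNReal.inv_mul_cancel hA0 (measure_ne_top μ A), mul_one]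
    congr 1
    simp [Nat.cast_sub (show 1 ≤ b by omega)]
end
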